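/- arXiv:2003.03858 — 7 statements merged into one kernel-verified Lean document; each statement's English description precedes it below -/
import Mathlib

section
/- Let S be an inverse semigroup with zero, E its semilattice of idempotents, and σ : S \ {0} → G an idempotent pure partial homomorphism to a group G (i.e., σ(st) = σ(s)σ(t) whenever s, t, st are all nonzero, and σ⁻¹(1) = E \ {0}). If s, t ∈ S \ {0} satisfy s⁻¹s = t⁻¹t and σ(s) = σ(t), then s = t. -/
/-- An inverse semigroup with zero: a semigroup with a zero element and, for each
element `s`, a unique generalized inverse `inv s`. -/
structure InvSemigroupZero (S : Type*) [Semigroup S] where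
  zero : S
  inv : S → S
  zero_mul : ∀ s, zero * s = zero
  mul_zero : ∀ s, s * zero = zero
  inv_spec₁ : ∀ s, s * inv s * s = s
  inv_spec₂ : ∀ s, inv s * s * inv s = inv s
  inv_unique : ∀ s t, s * t * s = s → t * s * t = t → t = inv s

section Aux

variable {S : Type*} [Semigroup S]

lemma aux_inv_inv (I : InvSemigroupZero S) (s : S) : I.inv (I.inv s) = s :=
  (I.inv_unique (I.inv s) s (I.inv_spec₂ s) (I.inv_spec₁ s)).symm

lemma aux_idem_inv (I : InvSemigroupZero S) {e : S} (he : e * e = e) : I.inv e = e :=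
  (I.inv_unique e e (by rw [he, he]) (by rw [he, he])).symm

lemma aux_inv_ne (I : InvSemigroupZero S) {s : S} (hs : s ≠ I.zero) : I.inv s ≠ I.zero := by
  intro h
  have h1 := I.inv_spec₁ s
  rw [h, I.mul_zero, I.zero_mul] at h1
  exact hs h1.symm

lemma aux_inv_mul_ne (I : InvSemigroupZero S) {s : S} (hs : s ≠ I.zero) :
    I.inv s * s ≠ I.zero := by
  intro h
  have h1 := I.inv_spec₁ s
  rw [mul_assoc, h, I.mul_zero] at h1
  exact hs h1.symm

lemma aux_inv_mul_idem (I : InvSemigroupZero S) (s : S) :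
    (I.inv s * s) * (I.inv s * s) = I.inv s * s := by
  calc (I.inv s * s) * (I.inv s * s) = I.inv s * (s * I.inv s * s) := by simp [mul_assoc]
    _ = I.inv s * s := by rw [I.inv_spec₁]

/-- The product of two idempotents is idempotent. -/
lemma aux_idem_mul (I : InvSemigroupZero S) {e f : S} (he : e * e = e) (hf : f * f = f) :
    (e * f) * (e * f) = e * f := by
  set x := I.inv (e * f) with hx
  have hxs₁ : (e * f) * x * (e * f) = e * f := I.inv_spec₁ (e * f)
  have hxs₂ : x * (e * f) * x = x := I.inv_spec₂ (e * f)
  have h1 : (e * f) * (f * x * e) * (e * f) = e * f := by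
    calc (e * f) * (f * x * e) * (e * f)
        = e * ((f * f) * (x * ((e * e) * f))) := by simp [mul_assoc]
      _ = e * (f * (x * (e * f))) := by rw [he, hf]
      _ = (e * f) * x * (e * f) := by simp [mul_assoc]
      _ = e * f := hxs₁
  have h2 : (f * x * e) * (e * f) * (f * x * e) = f * x * e := by
    calc (f * x * e) * (e * f) * (f * x * e)
        = f * (x * ((e * e) * ((f * f) * (x * e)))) := by simp [mul_assoc]
      _ = f * (x * (e * (f * (x * e)))) := by rw [he, hf]
      _ = f * (x * (e * f) * x) * e := by simp [mul_assoc]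
      _ = f * x * e := by rw [hxs₂]
  have h3 : f * x * e = x := I.inv_unique _ _ h1 h2
  have h4 : x * x = x := by
    calc x * x = (f * x * e) * (f * x * e) := by rw [h3]
      _ = f * (x * (e * f) * x) * e := by simp [mul_assoc]
      _ = f * x * e := by rw [hxs₂]
      _ = x := h3
  have h5 : e * f = x :=
    (aux_inv_inv I (e * f)).symm.trans (by rw [← hx]; exact aux_idem_inv I h4)
  rw [h5]; exact h4

/-- Idempotents commute. -/
lemma aux_idem_comm (I : InvSemigroupZero S) {e f : S} (he : e * e = e) (hf : f * f = f) :
    e * f = f * e := by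
  have hef := aux_idem_mul I he hf
  have hfe := aux_idem_mul I hf he
  have h1 : (e * f) * (f * e) * (e * f) = e * f := by
    calc (e * f) * (f * e) * (e * f)
        = e * ((f * f) * ((e * e) * f)) := by simp [mul_assoc]
      _ = e * (f * (e * f)) := by rw [he, hf]
      _ = (e * f) * (e * f) := by simp [mul_assoc]
      _ = e * f := hef
  have h2 : (f * e) * (e * f) * (f * e) = f * e := by
    calc (f * e) * (e * f) * (f * e)
        = f * ((e * e) * ((f * f) * e)) := by simp [mul_assoc]
      _ = f * (e * (f * e)) := by rw [he, hf]
      _ = (f * e) * (f * e) := by simp [mul_assoc]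
      _ = f * e := hfe
  have h3 : f * e = I.inv (e * f) := I.inv_unique _ _ h1 h2
  rw [h3, aux_idem_inv I hef]

end Aux

/-- If `σ` is an idempotent pure partial homomorphism on an inverse semigroup with zero,
and `s, t` are nonzero with `s⁻¹s = t⁻¹t` and `σ(s) = σ(t)`, then `s = t`. -/
theorem stmt0 {S G : Type*} [Semigroup S] [Group G]
    (I : InvSemigroupZero S) (σ : S → G)
    (hσmul : ∀ s t : S, s ≠ I.zero → t ≠ I.zero → s * t ≠ I.zero →
      σ (s * t) = σ s * σ t)
    (hσpure : ∀ s : S, s ≠ I.zero → (σ s = 1 ↔ s * s = s))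
    (s t : S) (hs : s ≠ I.zero) (ht : t ≠ I.zero)
    (hst : I.inv s * s = I.inv t * t) (hσ : σ s = σ t) :
    s = t := by
  -- σ of an inverse is the inverse of σ
  have hσinv : ∀ u : S, u ≠ I.zero → σ (I.inv u) = (σ u)⁻¹ := by
    intro u hu
    have h1 : σ (I.inv u * u) = σ (I.inv u) * σ u :=
      hσmul _ _ (aux_inv_ne I hu) hu (aux_inv_mul_ne I hu)
    have h2 : σ (I.inv u * u) = 1 :=
      (hσpure _ (aux_inv_mul_ne I hu)).2 (aux_inv_mul_idem I u)
    exact eq_inv_of_mul_eq_one_left (h1.symm.trans h2)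
  -- f := s * t⁻¹ is a nonzero idempotent
  have hft : s * I.inv t * t = s := by
    rw [mul_assoc, ← hst, ← mul_assoc, I.inv_spec₁]
  have hf0 : s * I.inv t ≠ I.zero := by
    intro h
    rw [h, I.zero_mul] at hft
    exact hs hft.symm
  have hσf : σ (s * I.inv t) = 1 := by
    rw [hσmul s (I.inv t) hs (aux_inv_ne I ht) hf0, hσinv t ht, hσ, mul_inv_cancel]
  have hff : (s * I.inv t) * (s * I.inv t) = s * I.inv t := (hσpure _ hf0).1 hσf
  -- g := t * s⁻¹ is a nonzero idempotent
  have hgs : t * I.inv s * s = t := by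
    rw [mul_assoc, hst, ← mul_assoc, I.inv_spec₁]
  have hg0 : t * I.inv s ≠ I.zero := by
    intro h
    rw [h, I.zero_mul] at hgs
    exact ht hgs.symm
  have hσg : σ (t * I.inv s) = 1 := by
    rw [hσmul t (I.inv s) ht (aux_inv_ne I hs) hg0, hσinv s hs, ← hσ, mul_inv_cancel]
  have hgg : (t * I.inv s) * (t * I.inv s) = t * I.inv s := (hσpure _ hg0).1 hσg
  -- f * g = s * s⁻¹ and g * f = t * t⁻¹, and they commute, so s s⁻¹ = t t⁻¹
  have hfg : (s * I.inv t) * (t * I.inv s) = s * I.inv s := by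
    calc (s * I.inv t) * (t * I.inv s) = s * (I.inv t * t) * I.inv s := by simp [mul_assoc]
      _ = s * (I.inv s * s) * I.inv s := by rw [hst]
      _ = s * I.inv s := by rw [← mul_assoc, I.inv_spec₁]
  have hgf : (t * I.inv s) * (s * I.inv t) = t * I.inv t := by
    calc (t * I.inv s) * (s * I.inv t) = t * (I.inv s * s) * I.inv t := by simp [mul_assoc]
      _ = t * (I.inv t * t) * I.inv t := by rw [hst]
      _ = t * I.inv t := by rw [← mul_assoc, I.inv_spec₁]
  have hEE : s * I.inv s = t * I.inv t := by
    rw [← hfg, ← hgf, aux_idem_comm I hff hgg]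
  -- h := t⁻¹ * s is a nonzero idempotent
  have hth : t * (I.inv t * s) = s := by
    rw [← mul_assoc, ← hEE, I.inv_spec₁]
  have hh0 : I.inv t * s ≠ I.zero := by
    intro h
    rw [h, I.mul_zero] at hth
    exact hs hth.symm
  have hσh : σ (I.inv t * s) = 1 := by
    rw [hσmul (I.inv t) s (aux_inv_ne I ht) hs hh0, hσinv t ht, ← hσ, inv_mul_cancel]
  have hhh : (I.inv t * s) * (I.inv t * s) = I.inv t * s := (hσpure _ hh0).1 hσh
  -- h * k = t⁻¹ t for k := s⁻¹ * t, and h absorbs s⁻¹ s; conclude h = t⁻¹ t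
  have hhk : (I.inv t * s) * (I.inv s * t) = I.inv t * t := by
    calc (I.inv t * s) * (I.inv s * t) = I.inv t * (s * I.inv s) * t := by simp [mul_assoc]
      _ = I.inv t * (t * I.inv t) * t := by rw [hEE]
      _ = (I.inv t * t) * (I.inv t * t) := by simp [mul_assoc]
      _ = I.inv t * t := aux_inv_mul_idem I t
  have hhe : (I.inv t * s) * (I.inv s * s) = I.inv t * s := by
    calc (I.inv t * s) * (I.inv s * s) = I.inv t * (s * I.inv s * s) := by simp [mul_assoc]
      _ = I.inv t * s := by rw [I.inv_spec₁]
  have hheq : I.inv t * s = I.inv t * t := by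
    calc I.inv t * s = (I.inv t * s) * (I.inv s * s) := hhe.symm
      _ = (I.inv t * s) * (I.inv t * t) := by rw [hst]
      _ = (I.inv t * s) * ((I.inv t * s) * (I.inv s * t)) := by rw [hhk]
      _ = ((I.inv t * s) * (I.inv t * s)) * (I.inv s * t) := by simp [mul_assoc]
      _ = (I.inv t * s) * (I.inv s * t) := by rw [hhh]
      _ = I.inv t * t := hhk
  calc s = t * (I.inv t * s) := hth.symm
    _ = t * (I.inv t * t) := by rw [hheq]
    _ = t := by rw [← mul_assoc, I.inv_spec₁]
end

section
/- Let P be a left-cancellative right LCM monoid, i.e., every nonempty constructible right ideal of P is a principal right ideal pP. Let P_P denote the group of bijections P → P expressible as finite compositions of left-multiplication maps x ↦ px (p ∈ P) and their set-theoretic inverses. Then P_P equals P*, the group of invertible elements of P, where u ∈ P* is identified with the bijection x ↦ ux. -/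
namespace Stmt6

variable {P : Type*} [Monoid P]

/-- The graph of the left-multiplication map `x ↦ p·x`. -/
def graph (p : P) : Set (P × P) := {q | q.2 = p * q.1}

/-- Composition of relations (partial maps), `rcomp R S = R ∘ S`. -/
def rcomp (R S : Set (P × P)) : Set (P × P) := {q | ∃ y, (q.1, y) ∈ S ∧ (y, q.2) ∈ R}

/-- The (set-theoretic) inverse of a relation. -/
def rflip (R : Set (P × P)) : Set (P × P) := {q | (q.2, q.1) ∈ R}

/-- Relations expressible as compositions of finitely many left-multiplication maps and
their set-theoretic inverses. -/
inductive Gen : Set (P × P) → Prop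
  | basic (p : P) : Gen (graph p)
  | flip {R : Set (P × P)} : Gen R → Gen (rflip R)
  | comp {R S : Set (P × P)} : Gen R → Gen S → Gen (rcomp R S)

/-- `R` is the graph of a bijection `P → P`. -/
def IsBijGraph (R : Set (P × P)) : Prop :=
  (∀ x : P, ∃! y, (x, y) ∈ R) ∧ (∀ y : P, ∃! x, (x, y) ∈ R)

/-- The partial map `q·x ↦ p·x`. -/
def sigma' (p q : P) : Set (P × P) := {a | ∃ x : P, a.1 = q * x ∧ a.2 = p * x}

theorem gen_nice
    (hcanc : ∀ p x y : P, p * x = p * y → x = y)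
    (hLCM : ∀ p q : P, (Set.range (p * ·) ∩ Set.range (q * ·) = ∅) ∨
      ∃ r : P, Set.range (p * ·) ∩ Set.range (q * ·) = Set.range (r * ·))
    {R : Set (P × P)} (h : Gen R) :
    R = ∅ ∨ ∃ p q : P, R = sigma' p q := by
  induction h with
  | basic p =>
    right
    refine ⟨p, 1, ?_⟩
    ext a
    constructor
    · intro ha; exact ⟨a.1, by simp, ha⟩
    · rintro ⟨x, hx1, hx2⟩
      simp only [one_mul] at hx1
      show a.2 = p * a.1
      rw [hx1, hx2]
  | flip hR ih =>
    rcases ih with h0 | ⟨p, q, rfl⟩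
    · left; subst h0; rfl
    · right
      refine ⟨q, p, ?_⟩
      ext a
      constructor
      · rintro ⟨x, hx1, hx2⟩; exact ⟨x, hx2, hx1⟩
      · rintro ⟨x, hx1, hx2⟩; exact ⟨x, hx2, hx1⟩
  | comp hR hS ihR ihS =>
    rcases ihR with h0 | ⟨p, q, rfl⟩
    · left; subst h0
      ext a; simp [rcomp]
    rcases ihS with h0 | ⟨r, s, rfl⟩
    · left; subst h0
      ext a; simp [rcomp]
    -- rcomp (sigma' p q) (sigma' r s)
    rcases hLCM r q with hempty | ⟨t, ht⟩
    · left
      ext a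
      simp only [rcomp, sigma', Set.mem_setOf_eq, Set.mem_empty_iff_false, iff_false]
      rintro ⟨y, ⟨x, hx1, hx2⟩, ⟨z, hz1, hz2⟩⟩
      have : y ∈ Set.range (r * ·) ∩ Set.range (q * ·) := ⟨⟨x, hx2.symm⟩, ⟨z, hz1.symm⟩⟩
      rw [hempty] at this
      exact this
    · right
      have ht1 : t ∈ Set.range (r * ·) ∩ Set.range (q * ·) := by
        rw [ht]; exact ⟨1, by simp⟩
      obtain ⟨⟨r₁, hr₁⟩, ⟨q₁, hq₁⟩⟩ := ht1
      replace hr₁ : r * r₁ = t := hr₁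
      replace hq₁ : q * q₁ = t := hq₁
      refine ⟨p * q₁, s * r₁, ?_⟩
      ext a
      constructor
      · rintro ⟨y, ⟨x, hx1, hx2⟩, ⟨z, hz1, hz2⟩⟩
        have hy : y ∈ Set.range (r * ·) ∩ Set.range (q * ·) := ⟨⟨x, hx2.symm⟩, ⟨z, hz1.symm⟩⟩
        rw [ht] at hy
        obtain ⟨w, hw⟩ := hy
        replace hw : t * w = y := hw
        have hx : x = r₁ * w := by
          apply hcanc r
          rw [← hx2, ← hw, ← hr₁, mul_assoc]
        have hz : z = q₁ * w := by
          apply hcanc q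
          rw [← hz1, ← hw, ← hq₁, mul_assoc]
        exact ⟨w, by rw [hx1, hx, mul_assoc], by rw [hz2, hz, mul_assoc]⟩
      · rintro ⟨w, hw1, hw2⟩
        refine ⟨t * w, ⟨r₁ * w, by rw [hw1, mul_assoc], by rw [← hr₁, mul_assoc]⟩,
          ⟨q₁ * w, by rw [← hq₁, mul_assoc], by rw [hw2, mul_assoc]⟩⟩

/-- For a left-cancellative right LCM monoid `P`, the group `P_P` of bijections of `P`
expressible as compositions of left multiplications and their inverses consists exactly
of the left multiplications by invertible elements of `P`. -/
theorem stmt6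
    (hcanc : ∀ p x y : P, p * x = p * y → x = y)
    (hLCM : ∀ p q : P, (Set.range (p * ·) ∩ Set.range (q * ·) = ∅) ∨
      ∃ r : P, Set.range (p * ·) ∩ Set.range (q * ·) = Set.range (r * ·))
    (R : Set (P × P)) :
    (Gen R ∧ IsBijGraph R) ↔
      ∃ u : P, (∃ v : P, u * v = 1 ∧ v * u = 1) ∧ R = graph u := by
  constructor
  · rintro ⟨hgen, hbij⟩
    rcases gen_nice hcanc hLCM hgen with h0 | ⟨p, q, rfl⟩
    · exfalso
      obtain ⟨y, hy, -⟩ := hbij.1 1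
      rw [h0] at hy
      exact hy
    · -- surjectivity of first coordinate at 1 : q is invertible
      obtain ⟨y, ⟨w', hw'1, hw'2⟩, -⟩ := hbij.1 1
      -- hw'1 : 1 = q * w'
      obtain ⟨x, ⟨w, hw1, hw2⟩, -⟩ := hbij.2 1
      -- hw2 : 1 = p * w
      have hqw' : q * w' = 1 := hw'1.symm
      have hpw : p * w = 1 := hw2.symm
      have hw'q : w' * q = 1 := by
        apply hcanc q
        rw [← mul_assoc, hqw', one_mul, mul_one]
      have hwp : w * p = 1 := by
        apply hcanc p
        rw [← mul_assoc, hpw, one_mul, mul_one]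
      refine ⟨p * w', ⟨q * w, ?_, ?_⟩, ?_⟩
      · rw [mul_assoc, ← mul_assoc w' q, hw'q, one_mul, hpw]
      · rw [mul_assoc, ← mul_assoc w p, hwp, one_mul, hqw']
      · ext a
        constructor
        · rintro ⟨x, hx1, hx2⟩
          show a.2 = (p * w') * a.1
          rw [hx1, hx2, mul_assoc, ← mul_assoc w' q, hw'q, one_mul]
        · intro ha
          refine ⟨w' * a.1, ?_, ?_⟩
          · rw [← mul_assoc, hqw', one_mul]
          · rw [ha, mul_assoc]
  · rintro ⟨u, ⟨v, huv, hvu⟩, rfl⟩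
    refine ⟨Gen.basic u, ?_, ?_⟩
    · intro x
      exact ⟨u * x, rfl, fun y hy => hy⟩
    · intro y
      refine ⟨v * y, ?_, ?_⟩
      · show y = u * (v * y)
        rw [← mul_assoc, huv, one_mul]
      · intro x hx
        replace hx : y = u * x := hx
        have : v * y = v * (u * x) := by rw [hx]
        rw [← mul_assoc, hvu, one_mul] at this
        exact this.symm
end Stmt6
end

section
/- In the Baumslag-Solitar group G = BS(k, l) = ⟨a, b | a b^k = b^l a⟩ with k < −1 and l > 0, let P = BS(k,l)^+ be the submonoid generated by a and b. Then there is no p ∈ P with g P ∩ P = p P for g = a b a⁻¹. Consequently, P ⊆ G does not satisfy the Toeplitz condition. -/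
/-- The defining relation of the Baumslag-Solitar group `BS(k,l) = ⟨a,b | a b^k = b^l a⟩`,
with `a` = generator `true` and `b` = generator `false`. -/
def bsRel (k l : ℤ) : Set (FreeGroup Bool) :=
  {FreeGroup.of true * (FreeGroup.of false) ^ k * (FreeGroup.of true)⁻¹ *
    ((FreeGroup.of false) ^ l)⁻¹}

/-- The Baumslag-Solitar group `BS(k, l)`. -/
abbrev BS (k l : ℤ) : Type := PresentedGroup (bsRel k l)

/-- The generator `a` of `BS(k,l)`. -/
def bsA (k l : ℤ) : BS k l := PresentedGroup.of true

/-- The generator `b` of `BS(k,l)`. -/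
def bsB (k l : ℤ) : BS k l := PresentedGroup.of false

/-- The Baumslag-Solitar monoid `BS(k,l)⁺`, identified with the submonoid of `BS(k,l)`
generated by `a` and `b`. -/
def bsP (k l : ℤ) : Submonoid (BS k l) := Submonoid.closure {bsA k l, bsB k l}

namespace BSaux

lemma bs_rel (k l : ℤ) : bsA k l * (bsB k l) ^ k * (bsA k l)⁻¹ = (bsB k l) ^ l := by
  have h : (PresentedGroup.mk (bsRel k l))
      (FreeGroup.of true * (FreeGroup.of false) ^ k * (FreeGroup.of true)⁻¹ *
        ((FreeGroup.of false) ^ l)⁻¹) = 1 := by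
    apply (QuotientGroup.eq_one_iff _).mpr
    exact Subgroup.subset_normalClosure rfl
  simp only [map_mul, map_zpow, map_inv] at h
  exact mul_inv_eq_one.mp h

/-- The letter-count homomorphism. -/
def bsCnt (k l : ℤ) : BS k l →* Multiplicative ℤ :=
  PresentedGroup.toGroup
    (f := fun x => Multiplicative.ofAdd (if x then 1 else 0)) (by
      rintro r hr
      rw [bsRel, Set.mem_singleton_iff] at hr
      subst hr
      simp)

def bsC (k l : ℤ) (x : BS k l) : ℤ := Multiplicative.toAdd (bsCnt k l x)

variable {k l : ℤ}

lemma bsC_mul (x y : BS k l) : bsC k l (x * y) = bsC k l x + bsC k l y := by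
  simp [bsC, map_mul]

lemma bsC_a : bsC k l (bsA k l) = 1 := by
  simp [bsC, bsCnt, bsA]

lemma bsC_b : bsC k l (bsB k l) = 0 := by
  simp [bsC, bsCnt, bsB]

lemma bsC_a_inv : bsC k l (bsA k l)⁻¹ = -1 := by
  simp [bsC, map_inv]
  have := bsC_a (k := k) (l := l)
  simp [bsC] at this
  simp [this]

lemma bsC_bpow (u : ℕ) : bsC k l ((bsB k l) ^ u) = 0 := by
  simp [bsC, map_pow]
  have := bsC_b (k := k) (l := l)
  simp [bsC] at this
  simp [this]

lemma bsC_bzpow (n : ℤ) : bsC k l ((bsB k l) ^ n) = 0 := by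
  simp [bsC, map_zpow]
  have := bsC_b (k := k) (l := l)
  simp [bsC] at this
  simp [this]

lemma bsC_form (s t : ℕ) :
    bsC k l ((bsB k l) ^ s * bsA k l * (bsB k l) ^ t) = 1 := by
  rw [bsC_mul, bsC_mul, bsC_a, bsC_bpow, bsC_bpow]; omega

lemma structure_lemma (x : BS k l) (hx : x ∈ bsP k l) :
    (bsC k l x = 0 ∧ ∃ u : ℕ, x = (bsB k l) ^ u) ∨
    (bsC k l x = 1 ∧ ∃ s t : ℕ, x = (bsB k l) ^ s * bsA k l * (bsB k l) ^ t) ∨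
    2 ≤ bsC k l x := by
  induction hx using Submonoid.closure_induction with
  | mem z hz =>
      rcases hz with rfl | rfl
      · exact Or.inr (Or.inl ⟨bsC_a, 0, 0, by simp⟩)
      · exact Or.inl ⟨bsC_b, 1, by simp⟩
  | one => exact Or.inl ⟨by simp [bsC], 0, by simp⟩
  | mul x y hx hy ihx ihy =>
      rcases ihx with ⟨hc1, u, rfl⟩ | ⟨hc1, s, t, rfl⟩ | hc1 <;>
        rcases ihy with ⟨hc2, v, rfl⟩ | ⟨hc2, s', t', rfl⟩ | hc2
      · exact Or.inl ⟨by rw [bsC_mul, hc1, hc2]; omega, u + v, by rw [pow_add]⟩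
      · exact Or.inr (Or.inl ⟨by rw [bsC_mul, hc1, hc2]; omega, u + s', t',
          by simp [pow_add, mul_assoc]⟩)
      · exact Or.inr (Or.inr (by rw [bsC_mul, hc1]; omega))
      · exact Or.inr (Or.inl ⟨by rw [bsC_mul, hc1, hc2]; omega, s, t + v,
          by simp [pow_add, mul_assoc]⟩)
      · exact Or.inr (Or.inr (by rw [bsC_mul, hc1, hc2]; omega))
      · exact Or.inr (Or.inr (by rw [bsC_mul, hc1]; omega))
      · exact Or.inr (Or.inr (by rw [bsC_mul, hc2]; omega))
      · exact Or.inr (Or.inr (by rw [bsC_mul, hc2]; omega))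
      · exact Or.inr (Or.inr (by rw [bsC_mul]; omega))

lemma bsC_nonneg (x : BS k l) (hx : x ∈ bsP k l) : 0 ≤ bsC k l x := by
  rcases structure_lemma x hx with ⟨h, _⟩ | ⟨h, _⟩ | h <;> omega



lemma exists_rho (k l : ℤ) (hk : k ≠ 0) (hl : l ≠ 0) :
    ∃ ρ : BS k l →* Equiv.Perm ℚ,
      (∀ q : ℚ, ρ (bsA k l) q = ((l : ℚ) / k) * q) ∧
      (∀ q : ℚ, ρ (bsA k l)⁻¹ q = ((k : ℚ) / l) * q) ∧
      (∀ (n : ℤ) (q : ℚ), ρ ((bsB k l) ^ n) q = (n : ℚ) + q) := by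
  have hk' : (k : ℚ) ≠ 0 := Int.cast_ne_zero.mpr hk
  have hl' : (l : ℚ) ≠ 0 := Int.cast_ne_zero.mpr hl
  have hc : ((l : ℚ) / k) ≠ 0 := div_ne_zero hl' hk'
  set u : ℚˣ := Units.mk0 ((l : ℚ) / k) hc with hu
  set f : Bool → Equiv.Perm ℚ := fun x => if x then u.mulLeft else Equiv.addLeft (1 : ℚ) with hf
  have hrels : ∀ r ∈ bsRel k l, FreeGroup.lift f r = 1 := by
    rintro r hr
    rw [bsRel, Set.mem_singleton_iff] at hr
    subst hr
    simp only [map_mul, map_zpow, map_inv, FreeGroup.lift_apply_of, hf, if_true, if_false,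
      Bool.false_eq_true]
    ext q
    simp only [Equiv.Perm.mul_apply, Equiv.zsmul_addLeft, Equiv.Perm.inv_def,
      Units.mulLeft_symm, Equiv.neg_addLeft, Equiv.addLeft_symm, Equiv.coe_addLeft, Units.mulLeft_apply,
      Equiv.Perm.one_apply, smul_eq_mul, zsmul_eq_mul, mul_one]
    simp only [hu, Units.val_mk0, Units.val_inv_eq_inv_val]
    field_simp
    ring
  refine ⟨PresentedGroup.toGroup hrels, ?_, ?_, ?_⟩
  · intro q
    rw [show bsA k l = PresentedGroup.of true from rfl, PresentedGroup.toGroup.of]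
    simp [hf, hu]
  · intro q
    rw [show bsA k l = PresentedGroup.of true from rfl, map_inv, PresentedGroup.toGroup.of]
    simp only [hf, if_true, Equiv.Perm.inv_def, Units.mulLeft_symm, Units.mulLeft_apply,
      Units.val_inv_eq_inv_val, hu, Units.val_mk0, inv_div]
  · intro n q
    rw [show bsB k l = PresentedGroup.of false from rfl, map_zpow, PresentedGroup.toGroup.of]
    simp [hf]

lemma exists_psi (k l : ℤ) (m : ℕ) (hmk : (m : ℤ) ∣ k) (hml : (m : ℤ) ∣ l) :
    ∃ ψ : BS k l →* Equiv.Perm (ZMod m × ZMod 2),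
      ψ (bsA k l) = Equiv.swap (0, 0) (0, 1) ∧
      (∀ n : ℤ, ψ ((bsB k l) ^ n) = Equiv.addLeft (((n : ZMod m), 0) : ZMod m × ZMod 2)) := by
  set f : Bool → Equiv.Perm (ZMod m × ZMod 2) := fun x =>
    if x then Equiv.swap (0, 0) (0, 1)
    else Equiv.addLeft (((1 : ZMod m), 0) : ZMod m × ZMod 2) with hf
  have hpow : ∀ n : ℤ,
      (Equiv.addLeft (((1 : ZMod m), 0) : ZMod m × ZMod 2)) ^ n
        = Equiv.addLeft (((n : ZMod m), 0) : ZMod m × ZMod 2) := by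
    intro n
    rw [Equiv.zsmul_addLeft]
    congr 1
    ext
    · simp [zsmul_eq_mul]
    · simp
  have hrels : ∀ r ∈ bsRel k l, FreeGroup.lift f r = 1 := by
    rintro r hr
    rw [bsRel, Set.mem_singleton_iff] at hr
    subst hr
    simp only [map_mul, map_zpow, map_inv, FreeGroup.lift_apply_of, hf, if_true, if_false,
      Bool.false_eq_true]
    rw [hpow k, hpow l]
    rw [(ZMod.intCast_zmod_eq_zero_iff_dvd k m).mpr hmk,
      (ZMod.intCast_zmod_eq_zero_iff_dvd l m).mpr hml]
    rw [show (((0 : ZMod m), (0 : ZMod 2)) : ZMod m × ZMod 2) = 0 from rfl]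
    simp
  refine ⟨PresentedGroup.toGroup hrels, ?_, ?_⟩
  · rw [show bsA k l = PresentedGroup.of true from rfl, PresentedGroup.toGroup.of]
    simp [hf]
  · intro n
    rw [show bsB k l = PresentedGroup.of false from rfl, map_zpow, PresentedGroup.toGroup.of]
    simp only [hf, if_false, Bool.false_eq_true]
    exact hpow n



variable {k l : ℤ}

lemma a_mem : bsA k l ∈ bsP k l := Submonoid.subset_closure (by simp)

lemma b_mem : bsB k l ∈ bsP k l := Submonoid.subset_closure (by simp)

lemma bzpow_mem {n : ℤ} (hn : 0 ≤ n) : (bsB k l) ^ n ∈ bsP k l := by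
  lift n to ℕ using hn
  rw [zpow_natCast]
  exact pow_mem b_mem n

lemma hrel (k l : ℤ) : bsA k l = (bsB k l) ^ l * bsA k l * (bsB k l) ^ (-k) := by
  rw [← bs_rel k l]
  group

lemma key (k l : ℤ) (N : ℤ) (m : ℕ) :
    bsA k l * (bsB k l) ^ N
      = (bsB k l) ^ (l * m) * bsA k l * (bsB k l) ^ (N - k * m) := by
  induction m with
  | zero => simp
  | succ m ih =>
      rw [ih]
      nth_rewrite 1 [hrel k l]
      push_cast
      rw [show l * ((m : ℤ) + 1) = l * m + l by ring,
        show N - k * ((m : ℤ) + 1) = -k + (N - k * m) by ring, zpow_add, zpow_add]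
      group

lemma abN_mem (hk : k < -1) (hl : 0 < l) (N : ℤ) :
    bsA k l * (bsB k l) ^ N ∈ bsP k l := by
  rw [key k l N N.natAbs]
  have hm0 : (0 : ℤ) ≤ (N.natAbs : ℤ) := Int.ofNat_nonneg _
  have habs : 0 ≤ N + (N.natAbs : ℤ) := by omega
  have h1 : 0 ≤ l * (N.natAbs : ℤ) := by positivity
  have h2 : 0 ≤ N - k * (N.natAbs : ℤ) := by nlinarith [mul_nonneg (show (0:ℤ) ≤ -k - 1 by omega) hm0]
  exact mul_mem (mul_mem (bzpow_mem h1) a_mem) (bzpow_mem h2)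



end BSaux

/-- For `k < -1` and `l > 0`, with `P = BS(k,l)⁺ ⊆ G = BS(k,l)` and `g = a b a⁻¹`, there
is no `p ∈ P` with `gP ∩ P = pP`; hence `P ⊆ G` does not satisfy the Toeplitz
condition. -/
theorem stmt9 (k l : ℤ) (hk : k < -1) (hl : 0 < l) :
    ¬ ∃ p ∈ bsP k l,
      ((bsA k l * bsB k l * (bsA k l)⁻¹) * ·) '' (bsP k l : Set (BS k l)) ∩
          (bsP k l : Set (BS k l))
        = (p * ·) '' (bsP k l : Set (BS k l)) := by
  rintro ⟨p, hp, hset⟩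
  set a := bsA k l with ha_def
  set b := bsB k l with hb_def
  have hk0 : k ≠ 0 := by omega
  have hl0 : l ≠ 0 := by omega
  have hk' : (k : ℚ) ≠ 0 := Int.cast_ne_zero.mpr hk0
  have hl' : (l : ℚ) ≠ 0 := Int.cast_ne_zero.mpr hl0
  obtain ⟨ρ, hA, hAinv, hB⟩ := BSaux.exists_rho k l hk0 hl0
  have hb1 : ∀ q : ℚ, ρ b q = 1 + q := by
    intro q
    have := hB 1 q
    simpa using this
  -- a * b lies in g P ∩ P
  have hab : a * b ∈ ((a * b * a⁻¹) * ·) '' (bsP k l : Set (BS k l)) ∩ (bsP k l : Set (BS k l)) := by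
    refine ⟨⟨a, BSaux.a_mem, ?_⟩, mul_mem BSaux.a_mem BSaux.b_mem⟩
    show a * b * a⁻¹ * a = a * b
    group
  rw [hset] at hab
  obtain ⟨x0, hx0P, hx0⟩ := hab
  have hx0' : p * x0 = a * b := hx0
  have hcpx : BSaux.bsC k l p + BSaux.bsC k l x0 = 1 := by
    have h := congrArg (BSaux.bsC k l) hx0'
    rw [BSaux.bsC_mul, BSaux.bsC_mul, BSaux.bsC_a, BSaux.bsC_b] at h
    omega
  have hcx0 : 0 ≤ BSaux.bsC k l x0 := BSaux.bsC_nonneg _ hx0P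
  rcases BSaux.structure_lemma p hp with ⟨hc0, u, rfl⟩ | ⟨hc1, s, t, rfl⟩ | hc2
  · -- Case p = b^u : leads to a b a⁻¹ being a power of b, impossible.
    have hpmem : (b : BS k l) ^ u ∈
        ((a * b * a⁻¹) * ·) '' (bsP k l : Set (BS k l)) ∩ (bsP k l : Set (BS k l)) := by
      rw [hset]
      exact ⟨1, (bsP k l).one_mem, mul_one _⟩
    obtain ⟨⟨q, hqP, hq⟩, -⟩ := hpmem
    have hq' : a * b * a⁻¹ * q = b ^ u := hq
    have hcq : BSaux.bsC k l q = 0 := by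
      have h := congrArg (BSaux.bsC k l) hq'
      rw [BSaux.bsC_mul, BSaux.bsC_mul, BSaux.bsC_mul, BSaux.bsC_a, BSaux.bsC_b,
        BSaux.bsC_a_inv, BSaux.bsC_bpow] at h
      omega
    rcases BSaux.structure_lemma q hqP with ⟨-, v, rfl⟩ | ⟨hcc, -⟩ | hcc
    · have hq2 : a * b * a⁻¹ * b ^ ((v : ℤ)) = b ^ ((u : ℤ)) := by
        rw [zpow_natCast, zpow_natCast]; exact hq'
      have hval := congrArg (fun z => ρ z (0 : ℚ)) hq2
      simp only [map_mul, Equiv.Perm.mul_apply, ha_def, hb_def, hA, hAinv, hB, hb_def ▸ hb1] at hval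
      have hQ : (l : ℚ) = k * ((u : ℚ) - (v : ℚ)) := by
        field_simp at hval
        push_cast at hval
        have h5 : (l : ℚ) + k * (v : ℚ) = (u : ℚ) * k :=
          mul_left_cancel₀ hl' (by linear_combination (l : ℚ) * hval)
        linear_combination h5
      have hZ : l = k * ((u : ℤ) - (v : ℤ)) := by exact_mod_cast hQ
      set m := (-k).toNat with hm
      have hmz : (m : ℤ) = -k := Int.toNat_of_nonneg (by omega)
      have hmk : (m : ℤ) ∣ k := ⟨-1, by rw [hmz]; ring⟩
      have hml : (m : ℤ) ∣ l := ⟨-((u : ℤ) - v), by rw [hmz, hZ]; ring⟩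
      have hm2 : 2 ≤ m := by omega
      obtain ⟨ψ, hψa, hψb⟩ := BSaux.exists_psi k l m hmk hml
      have hψb1 : ψ b = Equiv.addLeft (((1 : ZMod m), 0) : ZMod m × ZMod 2) := by
        have := hψb 1
        simpa using this
      have h1ne : (1 : ZMod m) ≠ 0 := by
        intro h
        have h2 : ((1 : ℤ) : ZMod m) = 0 := by exact_mod_cast h
        rw [ZMod.intCast_zmod_eq_zero_iff_dvd] at h2
        have := Int.le_of_dvd one_pos h2
        omega
      have hg : a * b * a⁻¹ = b ^ ((u : ℤ) - (v : ℤ)) := by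
        rw [zpow_sub, ← hq2]
        group
      have hval2 := congrArg (fun z => ψ z ((0, 0) : ZMod m × ZMod 2)) hg
      simp only [map_mul, map_inv, ha_def, hb_def, hψa, hψb, hb_def ▸ hψb1, Equiv.swap_inv,
        Equiv.Perm.mul_apply] at hval2
      have e1 : (Equiv.swap ((0, 0) : ZMod m × ZMod 2) (0, 1)) (0, 0) = (0, 1) :=
        Equiv.swap_apply_left _ _
      have e2 : (Equiv.addLeft (((1 : ZMod m), 0) : ZMod m × ZMod 2)) (0, 1) = (1, 1) := by
        simp [Equiv.coe_addLeft, Prod.ext_iff]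
      have e3 : (Equiv.swap ((0, 0) : ZMod m × ZMod 2) (0, 1)) (1, 1) = (1, 1) :=
        Equiv.swap_apply_of_ne_of_ne (by simp [Prod.ext_iff, h1ne]) (by simp [Prod.ext_iff, h1ne])
      rw [e1, e2, e3] at hval2
      simp only [Equiv.coe_addLeft, Prod.mk_add_mk, add_zero, zero_add] at hval2
      have := congrArg Prod.snd hval2
      simp only at this
      exact absurd this (by decide)
    · omega
    · omega
  · -- Case p = b^s * a * b^t : p must left-divide a b^n for all n, impossible.
    set n : ℤ := (t : ℤ) + s * k - 1 with hn
    have habn : a * b ^ n ∈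
        ((a * b * a⁻¹) * ·) '' (bsP k l : Set (BS k l)) ∩ (bsP k l : Set (BS k l)) := by
      refine ⟨⟨a * b ^ (n - 1), BSaux.abN_mem hk hl (n - 1), ?_⟩, BSaux.abN_mem hk hl n⟩
      show a * b * a⁻¹ * (a * b ^ (n - 1)) = a * b ^ n
      group
    rw [hset] at habn
    obtain ⟨x, hxP, hxe⟩ := habn
    have hxe' : b ^ s * a * b ^ t * x = a * b ^ n := hxe
    have hcx : BSaux.bsC k l x = 0 := by
      have h := congrArg (BSaux.bsC k l) hxe'
      rw [BSaux.bsC_mul, BSaux.bsC_form, BSaux.bsC_mul, BSaux.bsC_a, BSaux.bsC_bzpow] at h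
      omega
    rcases BSaux.structure_lemma x hxP with ⟨-, w, rfl⟩ | ⟨hcc, -⟩ | hcc
    · have heq : b ^ (s : ℤ) * a * b ^ ((t : ℤ) + (w : ℤ)) = a * b ^ n := by
        rw [zpow_add, zpow_natCast, zpow_natCast, zpow_natCast, ← hxe']
        rw [← hb_def]
        group
      have hval := congrArg (fun z => ρ z (0 : ℚ)) heq
      simp only [map_mul, Equiv.Perm.mul_apply, ha_def, hb_def, hA, hB] at hval
      have hQ : (k : ℚ) * s + l * ((t : ℚ) + (w : ℚ)) = l * (n : ℚ) := by
        field_simp at hval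
        push_cast at hval
        linarith
      have hZ : k * (s : ℤ) + l * ((t : ℤ) + (w : ℤ)) = l * n := by exact_mod_cast hQ
      have e1 : k * (s : ℤ) ≤ 0 :=
        mul_nonpos_of_nonpos_of_nonneg (by omega) (Int.ofNat_nonneg _)
      have key2 : l * (w : ℤ) = k * (s : ℤ) * (l - 1) - l := by
        rw [hn] at hZ
        linear_combination hZ
      have e3 : 0 ≤ l * (w : ℤ) := by positivity
      nlinarith [mul_nonpos_of_nonpos_of_nonneg e1 (show (0 : ℤ) ≤ l - 1 by omega)]
    · omega
    · omega
  · omega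
end

section
/- Let K be a number field with ring of integers R, 𝔪 = 𝔪_∞𝔪_0 a modulus, Γ ≤ (R/𝔪)* a subgroup, R_{𝔪,Γ} the associated congruence monoid, and K_{𝔪,Γ} = {x ∈ K_𝔪 : [x]_𝔪 ∈ Γ}. Let 𝔞 be a nonzero ideal of R coprime to 𝔪_0, and set 𝔞_{𝔪,Γ} = 𝔞 ∩ R_{𝔪,Γ}. Consider the right action of G = (R_𝔪⁻¹R) ⋊ K_{𝔪,Γ} on subsets of R_𝔪⁻¹R ⋊ K_{𝔪,Γ}. Then the stabilizer {g ∈ G : (R × 𝔞_{𝔪,Γ})·g = R × 𝔞_{𝔪,Γ}} equals (R:𝔞) ⋊ R*_{𝔪,Γ}, where (R:𝔞) = {x ∈ K : x𝔞 ⊆ R} and R*_{𝔪,Γ} = R* ∩ K_{𝔪,Γ}. -/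
open NumberField

set_option maxHeartbeats 1000000 in
set_option synthInstance.maxHeartbeats 200000 in
open Classical in
/-- Stabilizer computation for `ax+b`-type semigroups attached to congruence monoids:
with `R = 𝓞 K`, a modulus `𝔪 = 𝔪_∞ 𝔪_0` (here `minf` is a set of real embeddings and
`m0` a nonzero ideal), `Γ ≤ (R/𝔪)^*`, `R_{𝔪,Γ}` the congruence monoid,
`K_{𝔪,Γ}` its group of quotients, and `𝔞` a nonzero ideal coprime to `𝔪_0` such that
`𝔞_{𝔪,Γ} = 𝔞 ∩ R_{𝔪,Γ}` generates `𝔞` (Bruce's lemma), the stabilizer of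
`R × 𝔞_{𝔪,Γ}` under the right translation action of `G = (R_𝔪⁻¹R) ⋊ K_{𝔪,Γ}`
(with multiplication `(x,s)(y,t) = (x + sy, st)`) equals `(R:𝔞) ⋊ R^*_{𝔪,Γ}`. -/
theorem stmt10 {K : Type*} [Field K] [NumberField K]
    (minf : Set (K →+* ℝ)) (m0 : Ideal (𝓞 K)) (hm0 : m0 ≠ ⊥)
    (Γ : Subgroup ((minf → ℤˣ) × ((𝓞 K) ⧸ m0)ˣ))
    (sgn : 𝓞 K → (minf → ℤˣ))
    (hsgn : ∀ (a : 𝓞 K) (w : minf),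
      sgn a w = if 0 ≤ (w : K →+* ℝ) (algebraMap (𝓞 K) K a) then 1 else -1)
    (RmΓ : Set (𝓞 K))
    (hRmΓ : RmΓ = {a : 𝓞 K | a ≠ 0 ∧ Ideal.span {a} ⊔ m0 = ⊤ ∧
      ∃ u : ((𝓞 K) ⧸ m0)ˣ, (u : (𝓞 K) ⧸ m0) = Ideal.Quotient.mk m0 a ∧ (sgn a, u) ∈ Γ})
    (Rm : Set (𝓞 K))
    (hRm : Rm = {a : 𝓞 K | a ≠ 0 ∧ Ideal.span {a} ⊔ m0 = ⊤})
    (RmInvR : Set K)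
    (hRmInvR : RmInvR = {x : K | ∃ a : 𝓞 K, ∃ b ∈ Rm,
      x = algebraMap (𝓞 K) K a / algebraMap (𝓞 K) K b})
    (KmΓ : Set K)
    (hKmΓ : KmΓ = {x : K | ∃ a ∈ RmΓ, ∃ b ∈ RmΓ,
      x = algebraMap (𝓞 K) K a / algebraMap (𝓞 K) K b})
    (𝔞 : Ideal (𝓞 K)) (h𝔞 : 𝔞 ≠ ⊥) (hcop : 𝔞 ⊔ m0 = ⊤)
    (hBruce : Ideal.span ((𝔞 : Set (𝓞 K)) ∩ RmΓ) = 𝔞)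
    (base : Set (K × K))
    (hbase : base = {q : K × K | (∃ x : 𝓞 K, q.1 = algebraMap (𝓞 K) K x) ∧
      ∃ a ∈ (𝔞 : Set (𝓞 K)) ∩ RmΓ, q.2 = algebraMap (𝓞 K) K a}) :
    {g : K × K | g.1 ∈ RmInvR ∧ g.2 ∈ KmΓ ∧
        (fun q : K × K => (q.1 + q.2 * g.1, q.2 * g.2)) '' base = base}
      = {g : K × K |
          (∀ a ∈ 𝔞, ∃ x : 𝓞 K, g.1 * algebraMap (𝓞 K) K a = algebraMap (𝓞 K) K x)
          ∧ g.2 ∈ KmΓ ∧ ∃ u : (𝓞 K)ˣ, algebraMap (𝓞 K) K (u : 𝓞 K) = g.2} := by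
  have inj : Function.Injective (algebraMap (𝓞 K) K) := IsFractionRing.injective _ _
  set p := algebraMap (𝓞 K) K with hpdef
  have pzero : ∀ a : 𝓞 K, a ≠ 0 → p a ≠ 0 := fun a ha h =>
    ha (inj (h.trans (map_zero p).symm))
  -- multiplicativity of sgn on nonzero elements
  have sgn_mul : ∀ {x y : 𝓞 K}, x ≠ 0 → y ≠ 0 → sgn (x * y) = sgn x * sgn y := by
    intro x y hx hy
    funext w
    have hmap : ∀ z : 𝓞 K, z ≠ 0 → (w : K →+* ℝ) (p z) ≠ 0 := fun z hz h =>
      (pzero z hz) ((w : K →+* ℝ).injective (h.trans (map_zero (w : K →+* ℝ)).symm))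
    rw [Pi.mul_apply, hsgn, hsgn, hsgn]
    have hxy : (w : K →+* ℝ) (p (x * y)) = (w : K →+* ℝ) (p x) * (w : K →+* ℝ) (p y) := by
      rw [map_mul, map_mul]
    rw [hxy]
    rcases (hmap x hx).lt_or_gt with h1 | h1 <;> rcases (hmap y hy).lt_or_gt with h2 | h2
    · rw [if_pos (mul_pos_of_neg_of_neg h1 h2).le, if_neg (not_le.mpr h1),
        if_neg (not_le.mpr h2)]; decide
    · rw [if_neg (not_le.mpr (mul_neg_of_neg_of_pos h1 h2)), if_neg (not_le.mpr h1),
        if_pos h2.le]; decide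
    · rw [if_neg (not_le.mpr (mul_neg_of_pos_of_neg h1 h2)), if_pos h1.le,
        if_neg (not_le.mpr h2)]; decide
    · rw [if_pos (mul_pos h1 h2).le, if_pos h1.le, if_pos h2.le]; decide
  have hRne : ∀ a ∈ RmΓ, a ≠ 0 := by rw [hRmΓ]; exact fun a ha => ha.1
  have hRsub : RmΓ ⊆ Rm := by rw [hRmΓ, hRm]; exact fun a ha => ⟨ha.1, ha.2.1⟩
  -- congruence monoid absorbs units lying in K_{m,Γ}
  have unit_mem : ∀ a ∈ RmΓ, ∀ (u : (𝓞 K)ˣ) (b c : 𝓞 K), b ∈ RmΓ → c ∈ RmΓ →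
      (u : 𝓞 K) * c = b → a * u ∈ RmΓ := by
    intro a ha u b c hb hc huc
    have ha0 : a ≠ 0 := hRne a ha
    have hb0 : b ≠ 0 := hRne b hb
    have hc0 : c ≠ 0 := hRne c hc
    rw [hRmΓ] at ha hb hc ⊢
    obtain ⟨-, hacop, va, hva, haΓ⟩ := ha
    obtain ⟨-, -, vb, hvb, hbΓ⟩ := hb
    obtain ⟨-, -, vc, hvc, hcΓ⟩ := hc
    have hau0 : a * (u : 𝓞 K) ≠ 0 := mul_ne_zero ha0 u.ne_zero
    have key : (a * (u : 𝓞 K)) * c = a * b := by rw [mul_assoc, huc]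
    refine ⟨hau0, ?_, va * vb * vc⁻¹, ?_, ?_⟩
    · have hsp : Ideal.span {a * (u : 𝓞 K)} = Ideal.span ({a} : Set (𝓞 K)) :=
        (Ideal.span_singleton_eq_span_singleton.mpr ⟨u, rfl⟩).symm
      rw [hsp]; exact hacop
    · have hmk : Ideal.Quotient.mk m0 (a * (u : 𝓞 K)) * (↑vc : 𝓞 K ⧸ m0)
          = (↑va : 𝓞 K ⧸ m0) * (↑vb : 𝓞 K ⧸ m0) := by
        rw [hvc, hva, hvb, ← map_mul, ← map_mul, key]
      calc (↑(va * vb * vc⁻¹) : 𝓞 K ⧸ m0)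
            = ((↑va : 𝓞 K ⧸ m0) * ↑vb) * (↑(vc⁻¹) : 𝓞 K ⧸ m0) := by
            rw [Units.val_mul, Units.val_mul]
        _ = (Ideal.Quotient.mk m0 (a * (u : 𝓞 K)) * (↑vc : 𝓞 K ⧸ m0))
            * (↑(vc⁻¹) : 𝓞 K ⧸ m0) := by rw [hmk]
        _ = Ideal.Quotient.mk m0 (a * (u : 𝓞 K)) := by
            rw [mul_assoc, Units.mul_inv, mul_one]
    · have h1 : sgn ((a * (u : 𝓞 K)) * c) = sgn (a * (u : 𝓞 K)) * sgn c := sgn_mul hau0 hc0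
      rw [key, sgn_mul ha0 hb0] at h1
      have hsgneq : sgn (a * (u : 𝓞 K)) = sgn a * sgn b * (sgn c)⁻¹ :=
        eq_mul_inv_iff_mul_eq.mpr h1.symm
      have hpr : (sgn (a * (u : 𝓞 K)), va * vb * vc⁻¹)
          = (sgn a, va) * (sgn b, vb) * ((sgn c, vc))⁻¹ := by
        rw [hsgneq]; rfl
      rw [hpr]; exact mul_mem (mul_mem haΓ hbΓ) (inv_mem hcΓ)
  -- units of K_{m,Γ} give translation data both ways
  have unit_data : ∀ u : (𝓞 K)ˣ, p (u : 𝓞 K) ∈ KmΓ →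
      (∃ b ∈ RmΓ, ∃ c ∈ RmΓ, (u : 𝓞 K) * c = b) ∧
      (∃ b ∈ RmΓ, ∃ c ∈ RmΓ, ((u⁻¹ : (𝓞 K)ˣ) : 𝓞 K) * c = b) := by
    intro u hu
    rw [hKmΓ] at hu
    obtain ⟨b, hb, c, hc, hbc⟩ := hu
    have hc0 : p c ≠ 0 := pzero c (hRne c hc)
    have huc : (u : 𝓞 K) * c = b := by
      apply inj
      rw [map_mul, hbc, div_mul_cancel₀ _ hc0]
    have hinv : ((u⁻¹ : (𝓞 K)ˣ) : 𝓞 K) * b = c := by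
      rw [← huc, ← mul_assoc, Units.inv_mul, one_mul]
    exact ⟨⟨b, hb, c, hc, huc⟩, ⟨c, hc, b, hb, hinv⟩⟩
  -- the generating set is nonempty
  obtain ⟨a0, ha0⟩ : ∃ a0, a0 ∈ (𝔞 : Set (𝓞 K)) ∩ RmΓ := by
    by_contra h
    push_neg at h
    have he : (𝔞 : Set (𝓞 K)) ∩ RmΓ = ∅ := Set.eq_empty_iff_forall_notMem.mpr h
    rw [he, Ideal.span_empty] at hBruce
    exact h𝔞 hBruce.symm
  ext g
  obtain ⟨g1, g2⟩ := g
  simp only [Set.mem_setOf_eq]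
  constructor
  · rintro ⟨hg1, hg2, him⟩
    have fwd : ∀ a ∈ (𝔞 : Set (𝓞 K)) ∩ RmΓ,
        (∃ x, p a * g1 = p x) ∧ ∃ a' ∈ (𝔞 : Set (𝓞 K)) ∩ RmΓ, p a * g2 = p a' := by
      intro a ha
      have hmem : ((0 : K), p a) ∈ base := by
        rw [hbase]; exact ⟨⟨0, (map_zero p).symm⟩, a, ha, rfl⟩
      have h' : ((0 : K) + p a * g1, p a * g2) ∈ base := by
        rw [← him]; exact Set.mem_image_of_mem _ hmem
      rw [hbase] at h'
      obtain ⟨⟨x, hx⟩, a', ha', ha'2⟩ := h'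
      exact ⟨⟨x, by rw [← hx, zero_add]⟩, a', ha', ha'2⟩
    -- first component condition, extended from the generators to all of 𝔞
    have cond1 : ∀ a ∈ 𝔞, ∃ x, g1 * p a = p x := by
      intro a ha
      rw [← hBruce] at ha
      refine Submodule.span_induction (p := fun a _ => ∃ x, g1 * p a = p x)
        ?_ ⟨0, by rw [map_zero, mul_zero]⟩ ?_ ?_ ha
      · intro x hxS
        obtain ⟨y, hy⟩ := (fwd x hxS).1
        exact ⟨y, by rw [mul_comm]; exact hy⟩
      · rintro x y - - ⟨xx, hxx⟩ ⟨yy, hyy⟩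
        exact ⟨xx + yy, by rw [map_add, mul_add, hxx, hyy, map_add]⟩
      · rintro r x - ⟨xx, hxx⟩
        refine ⟨r * xx, ?_⟩
        rw [smul_eq_mul, map_mul, map_mul, mul_left_comm, hxx]
    -- second component condition, extended from generators to all of 𝔞
    have cond2 : ∀ a ∈ 𝔞, ∃ a' ∈ 𝔞, p a * g2 = p a' := by
      intro a ha
      rw [← hBruce] at ha
      refine Submodule.span_induction (p := fun a _ => ∃ a' ∈ 𝔞, p a * g2 = p a')
        ?_ ⟨0, Submodule.zero_mem _, by rw [map_zero, zero_mul]⟩ ?_ ?_ ha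
      · intro x hxS
        obtain ⟨a', ha', h⟩ := (fwd x hxS).2
        exact ⟨a', ha'.1, h⟩
      · rintro x y - - ⟨xx, hxm, hxx⟩ ⟨yy, hym, hyy⟩
        exact ⟨xx + yy, Submodule.add_mem _ hxm hym,
          by rw [map_add, add_mul, hxx, hyy, map_add]⟩
      · rintro r x - ⟨xx, hxm, hxx⟩
        refine ⟨r * xx, Ideal.mul_mem_left _ _ hxm, ?_⟩
        rw [smul_eq_mul, map_mul, map_mul, mul_assoc, hxx]
    -- surjectivity data
    have bwd : ∀ b ∈ (𝔞 : Set (𝓞 K)) ∩ RmΓ,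
        ∃ a ∈ (𝔞 : Set (𝓞 K)) ∩ RmΓ, p a * g2 = p b := by
      intro b hb
      have hmem : ((0 : K), p b) ∈ base := by
        rw [hbase]; exact ⟨⟨0, (map_zero p).symm⟩, b, hb, rfl⟩
      rw [← him] at hmem
      obtain ⟨q, hq, heq⟩ := hmem
      rw [hbase] at hq
      obtain ⟨-, a, ha, hq2⟩ := hq
      have h2 : q.2 * g2 = p b := congrArg Prod.snd heq
      exact ⟨a, ha, by rw [← hq2]; exact h2⟩
    obtain ⟨a1, ha1, ha1g⟩ := bwd a0 ha0
    have hpa1 : p a1 ≠ 0 := pzero a1 (hRne a1 ha1.2)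
    -- span {a0} * 𝔞 = span {a1} * 𝔞
    have hle1 : Ideal.span {a0} * 𝔞 ≤ Ideal.span {a1} * 𝔞 := by
      rw [Ideal.mul_le]
      intro r hr a ha
      obtain ⟨x, hx⟩ := Ideal.mem_span_singleton'.mp hr
      obtain ⟨a', ha', haa'⟩ := cond2 a ha
      have hkey : a * a0 = a1 * a' := by
        apply inj
        rw [map_mul, map_mul, ← ha1g, ← haa']; ring
      have hrw : r * a = x * (a1 * a') := by
        rw [← hx, mul_assoc, mul_comm a0 a, hkey]
      rw [hrw]
      exact Ideal.mul_mem_left _ _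
        (Ideal.mul_mem_mul (Ideal.mem_span_singleton_self _) ha')
    have hle2 : Ideal.span {a1} * 𝔞 ≤ Ideal.span {a0} * 𝔞 := by
      rw [Ideal.mul_le]
      intro r hr a ha
      obtain ⟨x, hx⟩ := Ideal.mem_span_singleton'.mp hr
      have hJ : ∀ a ∈ 𝔞, a1 * a ∈ Ideal.span {a0} * 𝔞 := by
        intro a ha
        rw [← hBruce] at ha
        refine Submodule.span_induction (p := fun a _ => a1 * a ∈ Ideal.span {a0} * 𝔞)
          ?_ (show a1 * 0 ∈ Ideal.span {a0} * 𝔞 by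
            rw [mul_zero]; exact Submodule.zero_mem _) ?_ ?_ ha
        · intro b hbS
          obtain ⟨c, hc, hcg⟩ := bwd b hbS
          have hkey : c * a0 = a1 * b := by
            apply inj
            rw [map_mul, map_mul, ← ha1g, ← hcg]; ring
          rw [← hkey, mul_comm c a0]
          exact Ideal.mul_mem_mul (Ideal.mem_span_singleton_self _) hc.1
        · rintro b c - - hb hc
          rw [mul_add]; exact Submodule.add_mem _ hb hc
        · rintro rr b - hb
          rw [smul_eq_mul, mul_left_comm]
          exact Ideal.mul_mem_left _ _ hb
      have hrw : r * a = x * (a1 * a) := by rw [← hx]; ring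
      rw [hrw]
      exact Ideal.mul_mem_left _ _ (hJ a ha)
    have h𝔞0 : 𝔞 ≠ 0 := by rw [Ne, Submodule.zero_eq_bot]; exact h𝔞
    have hspans : Ideal.span {a0} = Ideal.span {a1} :=
      mul_right_cancel₀ h𝔞0 (le_antisymm hle1 hle2)
    obtain ⟨u, hu⟩ := Ideal.span_singleton_eq_span_singleton.mp hspans
    refine ⟨cond1, hg2, u⁻¹, ?_⟩
    have ha1u : a1 * ((u⁻¹ : (𝓞 K)ˣ) : 𝓞 K) = a0 := by
      rw [← hu, mul_assoc, Units.mul_inv, mul_one]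
    have : p a1 * p ((u⁻¹ : (𝓞 K)ˣ) : 𝓞 K) = p a0 := by rw [← map_mul, ha1u]
    exact (mul_left_cancel₀ hpa1 (ha1g.trans this.symm)).symm
  · rintro ⟨h1, hg2, u, hu⟩
    obtain ⟨hud1, hud2⟩ := unit_data u (by rw [hu]; exact hg2)
    obtain ⟨ha0𝔞, ha0Γ⟩ := ha0
    have ha0ne : p a0 ≠ 0 := pzero a0 (hRne a0 ha0Γ)
    refine ⟨?_, hg2, ?_⟩
    · obtain ⟨x, hx⟩ := h1 a0 ha0𝔞
      rw [hRmInvR]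
      exact ⟨x, a0, hRsub ha0Γ, (eq_div_iff ha0ne).mpr hx⟩
    · apply Set.Subset.antisymm
      · rintro - ⟨q, hq, rfl⟩
        rw [hbase] at hq ⊢
        obtain ⟨⟨x0, hx0⟩, a, ⟨ha𝔞, haΓ⟩, hq2⟩ := hq
        constructor
        · obtain ⟨xa, hxa⟩ := h1 a ha𝔞
          refine ⟨x0 + xa, ?_⟩
          show q.1 + q.2 * g1 = p (x0 + xa)
          rw [map_add, ← hx0, ← hxa, hq2]; ring
        · obtain ⟨b, hb, c, hc, hbc⟩ := hud1
          refine ⟨a * u, ⟨Ideal.mul_mem_right _ _ ha𝔞, unit_mem a haΓ u b c hb hc hbc⟩, ?_⟩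
          show q.2 * g2 = p (a * (u : 𝓞 K))
          rw [hq2, ← hu, ← map_mul]
      · intro q hq
        rw [hbase] at hq
        obtain ⟨⟨y0, hy0⟩, b, ⟨hb𝔞, hbΓ⟩, hq2⟩ := hq
        obtain ⟨bb, hbb, cc, hcc, hbc⟩ := hud2
        have hbu𝔞 : b * ((u⁻¹ : (𝓞 K)ˣ) : 𝓞 K) ∈ 𝔞 := Ideal.mul_mem_right _ _ hb𝔞
        set t : K := p (b * ((u⁻¹ : (𝓞 K)ˣ) : 𝓞 K)) with ht
        obtain ⟨xt, hxt⟩ := h1 _ hbu𝔞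
        refine ⟨(q.1 - t * g1, t), ?_, ?_⟩
        · rw [hbase]
          refine ⟨⟨y0 - xt, ?_⟩, b * ((u⁻¹ : (𝓞 K)ˣ) : 𝓞 K),
            ⟨hbu𝔞, unit_mem b hbΓ u⁻¹ bb cc hbb hcc hbc⟩, rfl⟩
          show q.1 - t * g1 = p (y0 - xt)
          rw [map_sub, ← hy0, mul_comm t g1, hxt]
        · show (q.1 - t * g1 + t * g1, t * g2) = q
          refine Prod.ext (by ring) ?_
          show t * g2 = q.2
          rw [hq2, ht, ← hu, ← map_mul, mul_assoc, Units.inv_mul, mul_one]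
end

section
/- Let G ↷ X be a partial dynamical system of a group G on a set X with domains U_g ⊆ X, and let 𝒱 be a G-invariant family of subsets of X (for all g: 𝒱_{g⁻¹} := {V ∈ 𝒱 : V ⊆ U_{g⁻¹}} satisfies g.𝒱_{g⁻¹} = 𝒱_g). Define S := {(g, V) : g ∈ G, ∅ ≠ V ∈ 𝒱_{g⁻¹}} ∪ {0}, with multiplication (h, W)(g, V) := (hg, g⁻¹.(W ∩ g.V)) if W ∩ g.V ≠ ∅ and 0 otherwise, assuming 𝒱 is closed under the operations V, W ↦ g⁻¹.(W ∩ g.V) whenever nonempty. Then S is an inverse semigroup with zero, (g, V)⁻¹ = (g⁻¹, g.V), and its nonzero idempotents are exactly the elements (1, V) for ∅ ≠ V ∈ 𝒱. Moreover, σ : S \ {0} → G, (g, V) ↦ g, is an idempotent pure partial homomorphism. -/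
/-- A partial dynamical system `G ↷ X`: subsets `U g ⊆ X` and (totalized) maps
`act g : X → X` restricting to bijections `U g⁻¹ → U g`, satisfying the partial
action axioms. -/
structure PartialDynSys (G X : Type*) [Group G] where
  U : G → Set X
  act : G → X → X
  U_one : U 1 = Set.univ
  act_one : ∀ x, act 1 x = x
  bijOn : ∀ g, Set.BijOn (act g) (U g⁻¹) (U g)
  image_eq : ∀ g h, act h '' (U (g * h)⁻¹ ∩ U h⁻¹) = U h ∩ U g⁻¹
  act_mul : ∀ g h x, x ∈ U (g * h)⁻¹ → x ∈ U h⁻¹ → act (g * h) x = act g (act h x)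

namespace PartialDynSys

variable {G X : Type*} [Group G] (A : PartialDynSys G X)

open Classical in
/-- The product `(h, W)(g, V) = (hg, g⁻¹.(W ∩ g.V))` if `W ∩ g.V ≠ ∅`, and `0`
otherwise. -/
noncomputable def pmul (p q : G × Set X) : Option (G × Set X) :=
  if p.2 ∩ A.act q.1 '' q.2 = ∅ then none
  else some (p.1 * q.1, A.act q.1⁻¹ '' (p.2 ∩ A.act q.1 '' q.2))

/-- The multiplication on `S = {(g,V)} ∪ {0}`, encoded on `Option (G × Set X)` with
`0 = none`. -/
noncomputable def smul (s t : Option (G × Set X)) : Option (G × Set X) :=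
  s.bind fun p => t.bind fun q => A.pmul p q

/-- The involution `(g, V)⁻¹ = (g⁻¹, g.V)`, `0⁻¹ = 0`. -/
def sinv (s : Option (G × Set X)) : Option (G × Set X) :=
  s.map fun p => (p.1⁻¹, A.act p.1 '' p.2)

/-- The carrier `S = {(g,V) : g ∈ G, ∅ ≠ V ∈ 𝒱_{g⁻¹}} ∪ {0}`. -/
def carrier (𝒱 : Set (Set X)) : Set (Option (G × Set X)) :=
  {s | s = none ∨ ∃ g V, s = some (g, V) ∧ V ∈ 𝒱 ∧ V ⊆ A.U g⁻¹ ∧ V ≠ ∅}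

end PartialDynSys

namespace PartialDynSys

variable {G X : Type*} [Group G] (A : PartialDynSys G X)

lemma act_mem {g : G} {x : X} (hx : x ∈ A.U g⁻¹) : A.act g x ∈ A.U g :=
  (A.bijOn g).mapsTo hx

lemma act_inv_act {g : G} {x : X} (hx : x ∈ A.U g⁻¹) :
    A.act g⁻¹ (A.act g x) = x := by
  have h := A.act_mul g⁻¹ g x (by simp [A.U_one]) hx
  simpa [A.act_one] using h.symm

lemma act_act_inv {g : G} {x : X} (hx : x ∈ A.U g) : A.act g (A.act g⁻¹ x) = x := by
  simpa using A.act_inv_act (g := g⁻¹) (by simpa using hx)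

lemma image_inv_image {g : G} {V : Set X} (hV : V ⊆ A.U g⁻¹) :
    A.act g⁻¹ '' (A.act g '' V) = V := by
  ext x; constructor
  · rintro ⟨y, ⟨v, hv, rfl⟩, rfl⟩
    rw [A.act_inv_act (hV hv)]; exact hv
  · intro hx
    exact ⟨A.act g x, ⟨x, hx, rfl⟩, A.act_inv_act (hV hx)⟩

lemma image_image_inv {g : G} {V : Set X} (hV : V ⊆ A.U g) :
    A.act g '' (A.act g⁻¹ '' V) = V := by
  simpa using A.image_inv_image (g := g⁻¹) (by simpa using hV)

lemma image_subset_U {g : G} {V : Set X} (hV : V ⊆ A.U g⁻¹) :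
    A.act g '' V ⊆ A.U g := by
  rintro _ ⟨x, hx, rfl⟩; exact A.act_mem (hV hx)

lemma image_inv_subset_U {g : G} {V : Set X} (hV : V ⊆ A.U g) :
    A.act g⁻¹ '' V ⊆ A.U g⁻¹ := by
  simpa using A.image_subset_U (g := g⁻¹) (by simpa using hV)

lemma act_one_image (V : Set X) : A.act 1 '' V = V := by
  ext x; simp [A.act_one]

lemma prod_dom {g h : G} {V W : Set X} (hV : V ⊆ A.U g⁻¹) (hW : W ⊆ A.U h⁻¹) :
    A.act g⁻¹ '' (W ∩ A.act g '' V) ⊆ A.U (h * g)⁻¹ := by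
  have key : A.act g '' (A.U (h * g)⁻¹ ∩ A.U g⁻¹) = A.U g ∩ A.U h⁻¹ := A.image_eq h g
  rintro _ ⟨x, ⟨hxW, hxgV⟩, rfl⟩
  have hx : x ∈ A.U g ∩ A.U h⁻¹ := ⟨A.image_subset_U hV hxgV, hW hxW⟩
  rw [← key] at hx
  obtain ⟨y, hy, rfl⟩ := hx
  rw [A.act_inv_act hy.2]; exact hy.1

lemma key_a {g h : G} {V W : Set X} (hV : V ⊆ A.U g⁻¹) (hW : W ⊆ A.U h⁻¹) :
    A.act (h * g) '' (A.act g⁻¹ '' (W ∩ A.act g '' V)) = A.act h '' (W ∩ A.act g '' V) := by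
  have hS : W ∩ A.act g '' V ⊆ A.U g := fun x hx => A.image_subset_U hV hx.2
  have heq : ∀ x ∈ A.act g⁻¹ '' (W ∩ A.act g '' V),
      A.act (h * g) x = A.act h (A.act g x) :=
    fun x hx => A.act_mul h g x (A.prod_dom hV hW hx) (A.image_inv_subset_U hS hx)
  rw [Set.image_congr heq, ← Set.image_image, A.image_image_inv hS]

lemma key_b {g h : G} (V : Set X) {W Z : Set X} (hW : W ⊆ A.U h⁻¹) :
    A.act h⁻¹ '' (Z ∩ A.act h '' W) ∩ A.act g '' V
      = A.act h⁻¹ '' (Z ∩ A.act h '' (W ∩ A.act g '' V)) := by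
  ext x; constructor
  · rintro ⟨⟨z, ⟨hz, w, hw, rfl⟩, rfl⟩, hx⟩
    rw [A.act_inv_act (hW hw)] at hx ⊢
    exact ⟨A.act h w, ⟨hz, w, ⟨hw, hx⟩, rfl⟩, A.act_inv_act (hW hw)⟩
  · rintro ⟨z, ⟨hz, w, ⟨hw, hwgV⟩, rfl⟩, rfl⟩
    rw [A.act_inv_act (hW hw)]
    exact ⟨⟨A.act h w, ⟨hz, w, hw, rfl⟩, A.act_inv_act (hW hw)⟩, hwgV⟩

lemma key_c {g h : G} {V W Z : Set X} (hV : V ⊆ A.U g⁻¹) (hW : W ⊆ A.U h⁻¹) :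
    A.act (h * g)⁻¹ '' (Z ∩ A.act h '' (W ∩ A.act g '' V))
      = A.act g⁻¹ '' (A.act h⁻¹ '' (Z ∩ A.act h '' (W ∩ A.act g '' V))) := by
  have key := A.image_eq (g⁻¹ * h⁻¹) h
  rw [show (g⁻¹ * h⁻¹ * h)⁻¹ = g by group, show (g⁻¹ * h⁻¹)⁻¹ = h * g by group] at key
  have hmem : ∀ x ∈ Z ∩ A.act h '' (W ∩ A.act g '' V), x ∈ A.U h ∩ A.U (h * g) := by
    rintro x ⟨hz, w, ⟨hwW, hwgV⟩, rfl⟩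
    rw [← key]
    exact ⟨w, ⟨A.image_subset_U hV hwgV, hW hwW⟩, rfl⟩
  have heq : ∀ x ∈ Z ∩ A.act h '' (W ∩ A.act g '' V),
      A.act (h * g)⁻¹ x = A.act g⁻¹ (A.act h⁻¹ x) := by
    intro x hx
    obtain ⟨h1, h2⟩ := hmem x hx
    rw [mul_inv_rev]
    exact A.act_mul g⁻¹ h⁻¹ x (by simpa using h2) (by simpa using h1)
  rw [Set.image_congr heq, ← Set.image_image]

lemma pmul_mk_eq_none {h g : G} {W V : Set X} (hc : W ∩ A.act g '' V = ∅) :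
    A.pmul (h, W) (g, V) = none := by simp [PartialDynSys.pmul, hc]

lemma pmul_mk_eq_some {h g : G} {W V : Set X} (hc : W ∩ A.act g '' V ≠ ∅) :
    A.pmul (h, W) (g, V) = some (h * g, A.act g⁻¹ '' (W ∩ A.act g '' V)) := by
  simp [PartialDynSys.pmul, hc]

lemma smul_some_some (p q : G × Set X) :
    A.smul (some p) (some q) = A.pmul p q := rfl

lemma smul_none_right (s : Option (G × Set X)) : A.smul s none = none := by
  cases s <;> rfl

lemma mem_carrier_some {𝒱 : Set (Set X)} {g : G} {V : Set X}
    (h : (some (g, V) : Option (G × Set X)) ∈ A.carrier 𝒱) :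
    V ∈ 𝒱 ∧ V ⊆ A.U g⁻¹ ∧ V ≠ ∅ := by
  rcases h with h | ⟨g', V', heq, h1, h2, h3⟩
  · simp at h
  · rw [Option.some_inj, Prod.mk.injEq] at heq
    obtain ⟨rfl, rfl⟩ := heq
    exact ⟨h1, h2, h3⟩

lemma mem_carrier_of {𝒱 : Set (Set X)} {g : G} {V : Set X}
    (h1 : V ∈ 𝒱) (h2 : V ⊆ A.U g⁻¹) (h3 : V ≠ ∅) :
    (some (g, V) : Option (G × Set X)) ∈ A.carrier 𝒱 :=
  Or.inr ⟨g, V, rfl, h1, h2, h3⟩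


lemma assoc_key {r h g : G} {Z W V : Set X}
    (_hZ : Z ⊆ A.U r⁻¹) (hW : W ⊆ A.U h⁻¹) (hV : V ⊆ A.U g⁻¹) :
    A.smul (A.smul (some (r, Z)) (some (h, W))) (some (g, V))
      = A.smul (some (r, Z)) (A.smul (some (h, W)) (some (g, V))) := by
  by_cases hc : Z ∩ A.act h '' (W ∩ A.act g '' V) = ∅
  · have hL : A.smul (A.smul (some (r, Z)) (some (h, W))) (some (g, V)) = none := by
      by_cases h1 : Z ∩ A.act h '' W = ∅
      · rw [A.smul_some_some, A.pmul_mk_eq_none h1]; rfl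
      · rw [A.smul_some_some, A.pmul_mk_eq_some h1, A.smul_some_some]
        apply A.pmul_mk_eq_none
        rw [A.key_b V hW, hc, Set.image_empty]
    have hR : A.smul (some (r, Z)) (A.smul (some (h, W)) (some (g, V))) = none := by
      by_cases h2 : W ∩ A.act g '' V = ∅
      · rw [A.smul_some_some, A.pmul_mk_eq_none h2, A.smul_none_right]
      · rw [A.smul_some_some, A.pmul_mk_eq_some h2, A.smul_some_some]
        apply A.pmul_mk_eq_none
        rw [A.key_a hV hW, hc]
    rw [hL, hR]
  · have h2 : W ∩ A.act g '' V ≠ ∅ := by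
      intro h2; exact hc (by rw [h2, Set.image_empty, Set.inter_empty])
    have h1 : Z ∩ A.act h '' W ≠ ∅ := by
      intro h1
      have hsub : Z ∩ A.act h '' (W ∩ A.act g '' V) ⊆ Z ∩ A.act h '' W :=
        Set.inter_subset_inter_right _ (Set.image_mono Set.inter_subset_left)
      exact hc (Set.subset_empty_iff.mp (h1 ▸ hsub))
    have hcb : A.act h⁻¹ '' (Z ∩ A.act h '' W) ∩ A.act g '' V ≠ ∅ := by
      rw [A.key_b V hW]
      simpa [Set.image_eq_empty] using hc
    have hca : Z ∩ A.act (h * g) '' (A.act g⁻¹ '' (W ∩ A.act g '' V)) ≠ ∅ := by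
      rw [A.key_a hV hW]; exact hc
    rw [A.smul_some_some, A.pmul_mk_eq_some h1, A.smul_some_some, A.pmul_mk_eq_some hcb,
      A.smul_some_some, A.pmul_mk_eq_some h2, A.smul_some_some, A.pmul_mk_eq_some hca]
    rw [Option.some_inj, Prod.mk.injEq]
    constructor
    · exact mul_assoc r h g
    · show A.act g⁻¹ '' (A.act h⁻¹ '' (Z ∩ A.act h '' W) ∩ A.act g '' V)
        = A.act (h * g)⁻¹ '' (Z ∩ A.act (h * g) '' (A.act g⁻¹ '' (W ∩ A.act g '' V)))
      rw [A.key_b V hW, A.key_a hV hW, A.key_c hV hW]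


lemma smul_sinv {g : G} {V : Set X} (hV : V ⊆ A.U g⁻¹) (hne : V ≠ ∅) :
    A.smul (some (g, V)) (A.sinv (some (g, V))) = some (1, A.act g '' V) := by
  have h0 : V ∩ A.act g⁻¹ '' (A.act g '' V) = V := by
    rw [A.image_inv_image hV, Set.inter_self]
  show A.pmul (g, V) (g⁻¹, A.act g '' V) = _
  rw [A.pmul_mk_eq_some (by rw [h0]; exact hne), h0]
  simp

lemma sinv_smul {g : G} {V : Set X} (hV : V ⊆ A.U g⁻¹) (hne : V ≠ ∅) :
    A.smul (A.sinv (some (g, V))) (some (g, V)) = some (1, V) := by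
  show A.pmul (g⁻¹, A.act g '' V) (g, V) = _
  have h0 : A.act g '' V ∩ A.act g '' V = A.act g '' V := Set.inter_self _
  rw [A.pmul_mk_eq_some (by rw [h0]; exact fun e => hne (Set.image_eq_empty.mp e)), h0,
    A.image_inv_image hV]
  simp

end PartialDynSys



/-- Given a partial dynamical system `G ↷ X` and a `G`-invariant family `𝒱` of subsets
of `X` (closed under the relevant operations), the set
`S = {(g,V) : ∅ ≠ V ∈ 𝒱_{g⁻¹}} ∪ {0}` with the product
`(h,W)(g,V) = (hg, g⁻¹.(W ∩ g.V))` (or `0`) is an inverse semigroup with zero with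
`(g,V)⁻¹ = (g⁻¹, g.V)`, its nonzero idempotents are exactly the `(1,V)` for
`∅ ≠ V ∈ 𝒱`, and `σ(g,V) = g` is an idempotent pure partial homomorphism. -/
theorem stmt12 {G X : Type*} [Group G] (A : PartialDynSys G X)
    (𝒱 : Set (Set X))
    (hGinv : ∀ g : G, (Set.image (A.act g)) '' {V | V ∈ 𝒱 ∧ V ⊆ A.U g⁻¹}
      = {V | V ∈ 𝒱 ∧ V ⊆ A.U g})
    (hclosed : ∀ (g h : G) (V W : Set X), V ∈ 𝒱 → V ⊆ A.U g⁻¹ → W ∈ 𝒱 → W ⊆ A.U h⁻¹ →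
      W ∩ A.act g '' V ≠ ∅ → A.act g⁻¹ '' (W ∩ A.act g '' V) ∈ 𝒱) :
    -- S is closed under multiplication
    (∀ s ∈ A.carrier 𝒱, ∀ t ∈ A.carrier 𝒱, A.smul s t ∈ A.carrier 𝒱) ∧
    -- multiplication is associative on S
    (∀ s ∈ A.carrier 𝒱, ∀ t ∈ A.carrier 𝒱, ∀ u ∈ A.carrier 𝒱,
      A.smul (A.smul s t) u = A.smul s (A.smul t u)) ∧
    -- 0 is a zero element
    (∀ s : Option (G × Set X), A.smul none s = none ∧ A.smul s none = none) ∧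
    -- sinv is a generalized inverse: s s⁻¹ s = s and s⁻¹ s s⁻¹ = s⁻¹, with
    -- (g,V)⁻¹ = (g⁻¹, g.V)
    (∀ s ∈ A.carrier 𝒱, A.sinv s ∈ A.carrier 𝒱 ∧
      A.smul (A.smul s (A.sinv s)) s = s ∧
      A.smul (A.smul (A.sinv s) s) (A.sinv s) = A.sinv s) ∧
    (∀ (g : G) (V : Set X), A.sinv (some (g, V)) = some (g⁻¹, A.act g '' V)) ∧
    -- uniqueness of generalized inverses (so S is an inverse semigroup)
    (∀ s ∈ A.carrier 𝒱, ∀ t ∈ A.carrier 𝒱,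
      A.smul (A.smul s t) s = s → A.smul (A.smul t s) t = t → t = A.sinv s) ∧
    -- the nonzero idempotents are exactly the (1, V), ∅ ≠ V ∈ 𝒱
    (∀ s ∈ A.carrier 𝒱, s ≠ none →
      (A.smul s s = s ↔ ∃ V ∈ 𝒱, V ≠ ∅ ∧ s = some ((1 : G), V))) ∧
    -- σ(g,V) = g is a partial homomorphism ...
    (∀ p q : G × Set X, some p ∈ A.carrier 𝒱 → some q ∈ A.carrier 𝒱 →
      A.smul (some p) (some q) ≠ none →
      ∃ r : G × Set X, A.smul (some p) (some q) = some r ∧ r.1 = p.1 * q.1) ∧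
    -- ... which is idempotent pure
    (∀ p : G × Set X, some p ∈ A.carrier 𝒱 →
      (p.1 = 1 ↔ A.smul (some p) (some p) = some p)) := by
  refine ⟨?_, ?_, ?_, ?_, ?_, ?_, ?_, ?_, ?_⟩
  · -- closure
    intro s hs t ht
    rcases hs with rfl | ⟨h, W, rfl, hW1, hW2, hW3⟩
    · exact Or.inl rfl
    rcases ht with rfl | ⟨g, V, rfl, hV1, hV2, hV3⟩
    · rw [A.smul_none_right]; exact Or.inl rfl
    by_cases hc : W ∩ A.act g '' V = ∅
    · rw [A.smul_some_some, A.pmul_mk_eq_none hc]; exact Or.inl rfl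
    · rw [A.smul_some_some, A.pmul_mk_eq_some hc]
      exact A.mem_carrier_of (hclosed g h V W hV1 hV2 hW1 hW2 hc) (A.prod_dom hV2 hW2)
        (fun e => hc (Set.image_eq_empty.mp e))
  · -- associativity
    intro s hs t ht u hu
    rcases hs with rfl | ⟨r, Z, rfl, hZ1, hZ2, hZ3⟩
    · rfl
    rcases ht with rfl | ⟨h, W, rfl, hW1, hW2, hW3⟩
    · rfl
    rcases hu with rfl | ⟨g, V, rfl, hV1, hV2, hV3⟩
    · rw [A.smul_none_right, A.smul_none_right, A.smul_none_right]
    exact A.assoc_key hZ2 hW2 hV2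
  · -- zero
    exact fun s => ⟨rfl, A.smul_none_right s⟩
  · -- generalized inverse properties
    intro s hs
    rcases hs with rfl | ⟨g, V, rfl, hV1, hV2, hV3⟩
    · exact ⟨Or.inl rfl, rfl, rfl⟩
    have hgV : A.act g '' V ∈ 𝒱 ∧ A.act g '' V ⊆ A.U g := by
      have hm : A.act g '' V ∈ {V | V ∈ 𝒱 ∧ V ⊆ A.U g} := by
        rw [← hGinv g]; exact ⟨V, ⟨hV1, hV2⟩, rfl⟩
      exact hm
    have hgVne : A.act g '' V ≠ ∅ := fun e => hV3 (Set.image_eq_empty.mp e)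
    refine ⟨A.mem_carrier_of hgV.1 (by simpa using hgV.2) hgVne, ?_, ?_⟩
    · rw [A.smul_sinv hV2 hV3]
      show A.pmul (1, A.act g '' V) (g, V) = some (g, V)
      have h0 : A.act g '' V ∩ A.act g '' V = A.act g '' V := Set.inter_self _
      rw [A.pmul_mk_eq_some (by rw [h0]; exact hgVne), h0, A.image_inv_image hV2]
      simp
    · rw [A.sinv_smul hV2 hV3]
      show A.pmul (1, V) (g⁻¹, A.act g '' V) = A.sinv (some (g, V))
      have h0 : V ∩ A.act g⁻¹ '' (A.act g '' V) = V := by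
        rw [A.image_inv_image hV2, Set.inter_self]
      rw [A.pmul_mk_eq_some (by rw [h0]; exact hV3), h0]
      simp only [one_mul, inv_inv]
      rfl
  · -- sinv formula
    exact fun g V => rfl
  · -- uniqueness of generalized inverses
    intro s hs t ht h1 h2
    rcases hs with rfl | ⟨g, V, rfl, hV1, hV2, hV3⟩
    · rcases ht with rfl | ⟨h, W, rfl, hW1, hW2, hW3⟩
      · rfl
      · exact absurd h2 (by rw [A.smul_none_right]; exact fun e => Option.some_ne_none _ e.symm)
    rcases ht with rfl | ⟨h, W, rfl, hW1, hW2, hW3⟩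
    · exact absurd h1 (by rw [A.smul_none_right]; exact fun e => Option.some_ne_none _ e.symm)
    by_cases hc : V ∩ A.act h '' W = ∅
    · exfalso
      rw [A.smul_some_some, A.pmul_mk_eq_none hc] at h1
      exact Option.some_ne_none _ h1.symm
    rw [A.smul_some_some, A.pmul_mk_eq_some hc, A.smul_some_some] at h1
    by_cases hc2 : A.act h⁻¹ '' (V ∩ A.act h '' W) ∩ A.act g '' V = ∅
    · exfalso; rw [A.pmul_mk_eq_none hc2] at h1; exact Option.some_ne_none _ h1.symm
    rw [A.pmul_mk_eq_some hc2, Option.some_inj, Prod.mk.injEq] at h1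
    obtain ⟨hg1, hg2⟩ := h1
    have hh : h = g⁻¹ := by
      have hgh : g * h = 1 := mul_right_cancel (a := g * h) (b := g)
        (by rw [one_mul]; exact hg1)
      exact eq_inv_of_mul_eq_one_right hgh
    subst hh
    simp only [inv_inv] at hg2 hW2
    have hS : V ∩ A.act g⁻¹ '' W ⊆ A.U g⁻¹ := fun x hx => hV2 hx.1
    have hZt : A.act g '' (V ∩ A.act g⁻¹ '' W) ∩ A.act g '' V
        = A.act g '' (V ∩ A.act g⁻¹ '' W) :=
      Set.inter_eq_left.mpr (Set.image_mono Set.inter_subset_left)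
    rw [hZt, A.image_inv_image hS] at hg2
    have hVsub : V ⊆ A.act g⁻¹ '' W := Set.inter_eq_left.mp hg2
    have hgVW : A.act g '' V ⊆ W := by
      have := Set.image_mono (f := A.act g) hVsub
      rwa [A.image_image_inv hW2] at this
    have hts : A.smul (some (g⁻¹, W)) (some (g, V)) = some (g⁻¹ * g, V) := by
      have hwc : W ∩ A.act g '' V = A.act g '' V := Set.inter_eq_right.mpr hgVW
      rw [A.smul_some_some,
        A.pmul_mk_eq_some (by rw [hwc]; exact fun e => hV3 (Set.image_eq_empty.mp e)),
        hwc, A.image_inv_image hV2]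
    rw [hts, A.smul_some_some] at h2
    by_cases hc3 : V ∩ A.act g⁻¹ '' W = ∅
    · exfalso; rw [A.pmul_mk_eq_none hc3] at h2; exact Option.some_ne_none _ h2.symm
    rw [A.pmul_mk_eq_some hc3, Option.some_inj, Prod.mk.injEq] at h2
    obtain ⟨-, hW'⟩ := h2
    rw [hg2, inv_inv] at hW'
    rw [← hW']
    rfl
  · -- idempotents
    intro s hs hne
    rcases hs with rfl | ⟨g, V, rfl, hV1, hV2, hV3⟩
    · exact absurd rfl hne
    constructor
    · intro hss
      by_cases hc : V ∩ A.act g '' V = ∅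
      · rw [A.smul_some_some, A.pmul_mk_eq_none hc] at hss
        exact absurd hss.symm hne
      rw [A.smul_some_some, A.pmul_mk_eq_some hc, Option.some_inj, Prod.mk.injEq] at hss
      have hg1 : g = 1 := mul_right_cancel (a := g) (b := g)
        (by rw [one_mul]; exact hss.1)
      exact ⟨V, hV1, hV3, by rw [hg1]⟩
    · rintro ⟨V', hV'1, hV'ne, heq⟩
      rw [heq, A.smul_some_some]
      have h0 : V' ∩ A.act 1 '' V' = V' := by rw [A.act_one_image, Set.inter_self]
      rw [A.pmul_mk_eq_some (by rw [h0]; exact hV'ne), h0]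
      simp [A.act_one_image]
  · -- partial homomorphism
    intro p q hp hq hne
    obtain ⟨gp, Vp⟩ := p
    obtain ⟨gq, Vq⟩ := q
    by_cases hc : Vp ∩ A.act gq '' Vq = ∅
    · exact absurd (by rw [A.smul_some_some, A.pmul_mk_eq_none hc]) hne
    · exact ⟨_, by rw [A.smul_some_some, A.pmul_mk_eq_some hc], rfl⟩
  · -- idempotent pure
    intro p hp
    obtain ⟨g, V⟩ := p
    obtain ⟨hV1, hV2, hV3⟩ := A.mem_carrier_some hp
    constructor
    · intro hg1
      show A.smul (some (g, V)) (some (g, V)) = some (g, V)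
      subst hg1
      rw [A.smul_some_some]
      have h0 : V ∩ A.act 1 '' V = V := by rw [A.act_one_image, Set.inter_self]
      rw [A.pmul_mk_eq_some (by rw [h0]; exact hV3), h0]
      simp [A.act_one_image]
    · intro hss
      by_cases hc : V ∩ A.act g '' V = ∅
      · rw [A.smul_some_some, A.pmul_mk_eq_none hc] at hss
        exact absurd hss (fun e => Option.some_ne_none _ e.symm)
      rw [A.smul_some_some, A.pmul_mk_eq_some hc, Option.some_inj, Prod.mk.injEq] at hss
      exact mul_right_cancel (a := g) (b := g) (by rw [one_mul]; exact hss.1)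
end

section
/- Let P be a subsemigroup of a group G. For each nonzero partial bijection s ∈ I_l(P) (the left inverse hull of P), there is a unique g ∈ G such that s(x) = g·x for all x in the domain of s; and the resulting map σ : I_l(P) \ {0} → G is an idempotent pure partial homomorphism. -/
namespace Stmt13

variable {G : Type*} [Group G]

/-- The graph of the left-multiplication map `P → pP`, `x ↦ px`, as a relation on `G`
supported on the subsemigroup `P`. -/
def graph (P : Subsemigroup G) (p : G) : Set (G × G) :=
  {q | q.1 ∈ P ∧ q.2 = p * q.1}

/-- Composition of relations (partial maps). -/
def rcomp (R S : Set (G × G)) : Set (G × G) := {q | ∃ y, (q.1, y) ∈ S ∧ (y, q.2) ∈ R}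

/-- The (set-theoretic) inverse of a relation. -/
def rflip (R : Set (G × G)) : Set (G × G) := {q | (q.2, q.1) ∈ R}

/-- The left inverse hull `I_l(P)`: partial bijections of `P` generated by the left
multiplication maps `x ↦ px`, `p ∈ P`, under composition and inversion (the empty
relation is the zero element). -/
inductive Gen (P : Subsemigroup G) : Set (G × G) → Prop
  | basic (p : G) (hp : p ∈ P) : Gen P (graph P p)
  | zero : Gen P ∅
  | flip {R : Set (G × G)} : Gen P R → Gen P (rflip R)
  | comp {R S : Set (G × G)} : Gen P R → Gen P S → Gen P (rcomp R S)

lemma exists_mul {P : Subsemigroup G} {R : Set (G × G)} (h : Gen P R) :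
    ∃ g : G, ∀ q ∈ R, q.2 = g * q.1 := by
  induction h with
  | basic p hp => exact ⟨p, fun q hq => hq.2⟩
  | zero => exact ⟨1, fun q hq => hq.elim⟩
  | flip h ih =>
      obtain ⟨g, hg⟩ := ih
      refine ⟨g⁻¹, fun q hq => ?_⟩
      have := hg _ hq
      simp only at this
      rw [this]; group
  | comp hR hS ihR ihS =>
      obtain ⟨g, hg⟩ := ihR
      obtain ⟨h', hh⟩ := ihS
      refine ⟨g * h', fun q hq => ?_⟩
      obtain ⟨y, hyS, hyR⟩ := hq
      have h1 := hh _ hyS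
      have h2 := hg _ hyR
      simp only at h1 h2
      rw [h2, h1, mul_assoc]

/-- If `P` is a subsemigroup of a group `G`, then every nonzero element of `I_l(P)` is
given by left multiplication by a unique group element; the resulting map
`σ : I_l(P) \ {0} → G` is an idempotent pure partial homomorphism. -/
theorem stmt13 (P : Subsemigroup G) :
    -- unique group element implementing each nonzero partial bijection
    (∀ R : Set (G × G), Gen P R → R ≠ ∅ →
      ∃! g : G, ∀ q ∈ R, q.2 = g * q.1) ∧
    -- σ is a partial homomorphism
    (∀ R S : Set (G × G), Gen P R → Gen P S → R ≠ ∅ → S ≠ ∅ → rcomp R S ≠ ∅ →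
      ∀ g h j : G, (∀ q ∈ R, q.2 = g * q.1) → (∀ q ∈ S, q.2 = h * q.1) →
        (∀ q ∈ rcomp R S, q.2 = j * q.1) → j = g * h) ∧
    -- σ is idempotent pure
    (∀ R : Set (G × G), Gen P R → R ≠ ∅ → ∀ g : G, (∀ q ∈ R, q.2 = g * q.1) →
      (g = 1 ↔ ∀ q ∈ R, q.1 = q.2)) := by
  refine ⟨?_, ?_, ?_⟩
  · intro R hR hne
    obtain ⟨g, hg⟩ := exists_mul hR
    obtain ⟨q, hq⟩ := Set.nonempty_iff_ne_empty.mpr hne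
    refine ⟨g, hg, fun g' hg' => ?_⟩
    have := (hg' q hq).symm.trans (hg q hq)
    exact mul_right_cancel this
  · intro R S hR hS hRne hSne hne g h j hg hh hj
    obtain ⟨q, hq⟩ := Set.nonempty_iff_ne_empty.mpr hne
    have hq2 := hq
    obtain ⟨y, hyS, hyR⟩ := hq2
    have h1 := hh _ hyS
    have h2 := hg _ hyR
    have h3 := hj _ hq
    simp only at h1 h2 h3
    have : j * q.1 = g * h * q.1 := by rw [← h3, h2, h1, mul_assoc]
    exact mul_right_cancel this
  · intro R hR hne g hg
    constructor
    · intro h1 q hq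
      rw [hg q hq, h1, one_mul]
    · intro hid
      obtain ⟨q, hq⟩ := Set.nonempty_iff_ne_empty.mpr hne
      have : q.1 = g * q.1 := (hid q hq) ▸ hg q hq
      calc g = g * q.1 * q.1⁻¹ := by group
        _ = q.1 * q.1⁻¹ := by rw [← this]
        _ = 1 := by group
end Stmt13
end

section
/- In an inverse semigroup S with zero, define λ_s : ℓ²(S \ {0}) → ℓ²(S \ {0}) on basis vectors by λ_s(δ_x) = δ_{sx} if s⁻¹s ≥ xx⁻¹ (i.e., s⁻¹s · xx⁻¹ = xx⁻¹), and λ_s(δ_x) = 0 otherwise. Then each λ_s is a well-defined partial isometry with λ_s* = λ_{s⁻¹}, and λ : S → B(ℓ²(S \ {0})) is multiplicative: λ_s λ_t = λ_{st} for all s, t ∈ S. -/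
namespace Stmt14Aux

variable {S : Type*} [Semigroup S] (I : InvSemigroupZero S)

private lemma exr {a b : S} (h : a = b) (y : S) : a * y = b * y := by rw [h]

private lemma exl {a b : S} (h : a = b) (y : S) : y * a = y * b := by rw [h]

private lemma cont {e : S} (he : e * e = e) : ∀ y : S, e * (e * y) = e * y := fun y => by
  rw [← mul_assoc, he]

lemma inv_inv (s : S) : I.inv (I.inv s) = s :=
  (I.inv_unique (I.inv s) s (I.inv_spec₂ s) (I.inv_spec₁ s)).symm

lemma idem_inv {e : S} (he : e * e = e) : I.inv e = e :=
  (I.inv_unique e e (by rw [he, he]) (by rw [he, he])).symm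

lemma idem_si (s : S) : (s * I.inv s) * (s * I.inv s) = s * I.inv s := by
  rw [← mul_assoc, I.inv_spec₁]

lemma idem_is (s : S) : (I.inv s * s) * (I.inv s * s) = I.inv s * s := by
  rw [← mul_assoc, I.inv_spec₂]

include I in
lemma idem_mul {e f : S} (he : e * e = e) (hf : f * f = f) :
    (e * f) * (e * f) = e * f := by
  set x := I.inv (e * f) with hxdef
  have h1 : e * f * x * (e * f) = e * f := I.inv_spec₁ (e * f)
  have h2 : x * (e * f) * x = x := I.inv_spec₂ (e * f)
  have h2' : x * (e * (f * x)) = x := by simpa only [mul_assoc] using h2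
  have key : x * (e * (f * (x * e))) = x * e := by
    have : (x * (e * (f * x))) * e = x * e := by rw [h2']
    simpa only [mul_assoc] using this
  have A2' : f * (x * (e * (f * (x * e)))) = f * (x * e) := by rw [key]
  have A1 : (e * f) * (f * (x * e)) * (e * f) = e * f := by
    have : (e * f) * (f * (x * e)) * (e * f) = e * f * x * (e * f) := by
      simp only [mul_assoc]
      rw [cont hf, cont he]
    rw [this, h1]
  have A2 : (f * (x * e)) * (e * f) * (f * (x * e)) = f * (x * e) := by
    have : (f * (x * e)) * (e * f) * (f * (x * e))
        = f * (x * (e * (f * (x * e)))) := by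
      simp only [mul_assoc]
      rw [cont he, cont hf]
    rw [this, A2']
  have hxe : f * (x * e) = x := (I.inv_unique (e * f) (f * (x * e)) A1 A2).trans hxdef.symm
  have hxx : x * x = x := by
    conv_lhs => rw [← hxe]
    simp only [mul_assoc]
    rw [key]
    exact hxe
  have hef : e * f = x := (I.inv_unique x (e * f) h2 h1).trans (idem_inv I hxx)
  rw [hef]; exact hxx

include I in
lemma idem_comm {e f : S} (he : e * e = e) (hf : f * f = f) : e * f = f * e := by
  have hef := idem_mul I he hf
  have hfe := idem_mul I hf he
  have hef' : e * (f * (e * f)) = e * f := by simpa only [mul_assoc] using hef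
  have hfe' : f * (e * (f * e)) = f * e := by simpa only [mul_assoc] using hfe
  have B1 : (e * f) * (f * e) * (e * f) = e * f := by
    have : (e * f) * (f * e) * (e * f) = e * (f * (e * f)) := by
      simp only [mul_assoc]
      rw [cont hf, cont he]
    rw [this, hef']
  have B2 : (f * e) * (e * f) * (f * e) = f * e := by
    have : (f * e) * (e * f) * (f * e) = f * (e * (f * e)) := by
      simp only [mul_assoc]
      rw [cont he, cont hf]
    rw [this, hfe']
  exact ((I.inv_unique (e * f) (f * e) B1 B2).trans (idem_inv I hef)).symm

/-- continuation form of commutation of two products -/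
private lemma comm4 {u v a b : S} (h : (u * v) * (a * b) = (a * b) * (u * v)) :
    ∀ y : S, u * (v * (a * (b * y))) = a * (b * (u * (v * y))) := fun y => by
  simpa only [mul_assoc] using exr h y

private lemma comm4c {u v a b : S} (h : (u * v) * (a * b) = (a * b) * (u * v)) :
    u * (v * (a * b)) = a * (b * (u * v)) := by
  simpa only [mul_assoc] using h

lemma inv_mul (s t : S) : I.inv (s * t) = I.inv t * I.inv s := by
  have swap : ∀ y : S, t * (I.inv t * (I.inv s * (s * y)))
      = I.inv s * (s * (t * (I.inv t * y))) :=
    comm4 (idem_comm I (idem_si I t) (idem_is I s))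
  have hat : t * (I.inv t * t) = t := by simpa only [mul_assoc] using I.inv_spec₁ t
  have has' : ∀ y, s * (I.inv s * (s * y)) = s * y := fun y => by
    simpa only [mul_assoc] using exr (I.inv_spec₁ s) y
  have hits : I.inv s * (s * I.inv s) = I.inv s := by
    simpa only [mul_assoc] using I.inv_spec₂ s
  have hit' : ∀ y, I.inv t * (t * (I.inv t * y)) = I.inv t * y := fun y => by
    simpa only [mul_assoc] using exr (I.inv_spec₂ t) y
  have C1 : (s * t) * (I.inv t * I.inv s) * (s * t) = s * t := by
    simp only [mul_assoc]
    rw [swap, hat, has']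
  have C2 : (I.inv t * I.inv s) * (s * t) * (I.inv t * I.inv s) = I.inv t * I.inv s := by
    simp only [mul_assoc]
    rw [← swap, hits, hit']
  exact (I.inv_unique (s * t) (I.inv t * I.inv s) C1 C2).symm

/-- The domain condition. -/
def D (s x : S) : Prop := (x * I.inv x) * (I.inv s * s) = x * I.inv x

instance (s x : S) [DecidableEq S] : Decidable (D I s x) :=
  inferInstanceAs (Decidable (_ = _))

lemma sinv_mul {s x : S} (h : D I s x) : I.inv s * (s * x) = x := by
  have h' : ∀ y, x * (I.inv x * (I.inv s * (s * y))) = x * (I.inv x * y) := fun y => by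
    simpa only [mul_assoc] using exr h y
  have hx1c : x * (I.inv x * x) = x := by simpa only [mul_assoc] using I.inv_spec₁ x
  have cEB : ∀ y, x * (I.inv x * (I.inv s * (s * y)))
      = I.inv s * (s * (x * (I.inv x * y))) :=
    comm4 (idem_comm I (idem_si I x) (idem_is I s))
  conv_lhs => rw [show x = x * (I.inv x * x) from hx1c.symm]
  rw [← cEB x, h' x]
  exact hx1c

lemma D_inv_always (s x : S) : D I (I.inv s) (s * x) := by
  unfold D
  rw [inv_mul I, inv_inv I]
  have hits : I.inv s * (s * I.inv s) = I.inv s := by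
    simpa only [mul_assoc] using I.inv_spec₂ s
  show (s * x) * (I.inv x * I.inv s) * (s * I.inv s) = (s * x) * (I.inv x * I.inv s)
  simp only [mul_assoc]
  rw [hits]

lemma D_of_inv (s y : S) : D I s (I.inv s * y) := by
  have := D_inv_always I (I.inv s) y
  rwa [inv_inv I] at this

lemma s_sinv_mul {s y : S} (h : D I (I.inv s) y) : s * (I.inv s * y) = y := by
  have := sinv_mul I h
  rwa [inv_inv I] at this

lemma mul_ne {s x : S} (h : D I s x) (hx : x ≠ I.zero) : s * x ≠ I.zero := fun h0 =>
  hx (by rw [← sinv_mul I h, h0, I.mul_zero])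

lemma D_mul_iff (s t x : S) : D I (s * t) x ↔ D I t x ∧ D I s (t * x) := by
  have ht1c : t * (I.inv t * t) = t := by simpa only [mul_assoc] using I.inv_spec₁ t
  have ht2c : I.inv t * (t * I.inv t) = I.inv t := by
    simpa only [mul_assoc] using I.inv_spec₂ t
  have hs1' : ∀ y, s * (I.inv s * (s * y)) = s * y := fun y => by
    simpa only [mul_assoc] using exr (I.inv_spec₁ s) y
  have ht2' : ∀ y, I.inv t * (t * (I.inv t * y)) = I.inv t * y := fun y => by
    simpa only [mul_assoc] using exr (I.inv_spec₂ t) y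
  have cEF : ∀ y, x * (I.inv x * (I.inv t * (t * y)))
      = I.inv t * (t * (x * (I.inv x * y))) :=
    comm4 (idem_comm I (idem_si I x) (idem_is I t))
  have cABc : t * (I.inv t * (I.inv s * s)) = I.inv s * (s * (t * I.inv t)) :=
    comm4c (idem_comm I (idem_si I t) (idem_is I s))
  have hW0 : D I (s * t) x ↔
      x * (I.inv x * (I.inv t * (I.inv s * (s * t)))) = x * I.inv x := by
    unfold D
    rw [inv_mul I]
    simp only [mul_assoc]
  have hW1 : D I t x ↔ x * (I.inv x * (I.inv t * t)) = x * I.inv x := by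
    unfold D
    simp only [mul_assoc]
  have hW2 : D I s (t * x) ↔
      t * (x * (I.inv x * (I.inv t * (I.inv s * s)))) = t * (x * (I.inv x * I.inv t)) := by
    unfold D
    rw [inv_mul I]
    simp only [mul_assoc]
  rw [hW0, hW1, hW2]
  constructor
  · intro h0
    have h0' : ∀ y, x * (I.inv x * (I.inv t * (I.inv s * (s * (t * y)))))
        = x * (I.inv x * y) := fun y => by
      simpa only [mul_assoc] using exr h0 y
    constructor
    · rw [← h0' (I.inv t * t), ht1c]
      exact h0
    · have inner : x * (I.inv x * (I.inv t * (I.inv s * s))) = x * (I.inv x * I.inv t) := by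
        rw [← h0' (I.inv t * (I.inv s * s)), cABc, hs1']
        exact h0' (I.inv t)
      rw [inner]
  · rintro ⟨h1, h2⟩
    have step : ∀ z, I.inv t * (t * (x * (I.inv x * z)))
        = x * (I.inv x * (I.inv t * (t * z))) := fun z => (cEF z).symm
    have hh := exl h2 (I.inv t)
    rw [step, step, ht2' (I.inv s * s), ht2c] at hh
    have key' : ∀ y, x * (I.inv x * (I.inv t * (I.inv s * (s * y))))
        = x * (I.inv x * (I.inv t * y)) := fun y => by
      simpa only [mul_assoc] using exr hh y
    rw [key' t]
    exact h1

section Analysis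

open scoped ENNReal NNReal

variable [DecidableEq S]

local notation "Idx" => {x : S // x ≠ I.zero}

/-- the underlying function of `λ_s f`. -/
noncomputable def preL (s : S) (f : Idx → ℂ) : Idx → ℂ :=
  fun y => if h : D I (I.inv s) (y : S) then f ⟨I.inv s * (y : S), mul_ne I h y.2⟩ else 0

lemma preL_memlp (s : S) (f : lp (fun _ : Idx => ℂ) 2) : Memℓp (preL I s ⇑f) 2 := by
  apply memℓp_gen
  have hj : Function.Injective
      (fun a : {y : Idx // D I (I.inv s) (y : S)} =>
        (⟨I.inv s * (a.1 : S), mul_ne I a.2 a.1.2⟩ : Idx)) := by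
    intro a b h
    have hv : I.inv s * (a.1 : S) = I.inv s * (b.1 : S) := congrArg Subtype.val h
    apply Subtype.ext; apply Subtype.ext
    calc (a.1 : S) = s * (I.inv s * (a.1 : S)) := (s_sinv_mul I a.2).symm
      _ = s * (I.inv s * (b.1 : S)) := by rw [hv]
      _ = (b.1 : S) := s_sinv_mul I b.2
  apply (summable_subtype_and_compl
    (s := {y : Idx | D I (I.inv s) (y : S)})).mp
  constructor
  · refine (Summable.comp_injective ((lp.memℓp f).summable ?_) hj).congr fun a => ?_
    · norm_num
    · show ‖f _‖ ^ (2 : ℝ≥0∞).toReal = ‖preL I s (⇑f) a.1‖ ^ (2 : ℝ≥0∞).toReal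
      have ha : D I (I.inv s) ((a.1 : Idx) : S) := a.2
      unfold preL
      rw [dif_pos ha]
  · refine summable_zero.congr fun a => ?_
    show (0:ℝ) = ‖preL I s (⇑f) a.1‖ ^ (2 : ℝ≥0∞).toReal
    have ha : ¬ D I (I.inv s) ((a.1 : Idx) : S) := a.2
    unfold preL
    rw [dif_neg ha]
    simp

/-- `λ_s` as a linear map. -/
noncomputable def lamL (s : S) : lp (fun _ : Idx => ℂ) 2 →ₗ[ℂ] lp (fun _ : Idx => ℂ) 2 where
  toFun f := ⟨preL I s ⇑f, preL_memlp I s f⟩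
  map_add' f g := by
    apply lp.ext
    funext y
    show preL I s (⇑(f + g)) y = preL I s ⇑f y + preL I s ⇑g y
    unfold preL
    by_cases h : D I (I.inv s) (y : S)
    · rw [dif_pos h, dif_pos h, dif_pos h, lp.coeFn_add]
      rfl
    · rw [dif_neg h, dif_neg h, dif_neg h, add_zero]
  map_smul' c f := by
    apply lp.ext
    funext y
    show preL I s (⇑(c • f)) y = c • preL I s ⇑f y
    unfold preL
    by_cases h : D I (I.inv s) (y : S)
    · rw [dif_pos h, dif_pos h, lp.coeFn_smul]
      rfl
    · rw [dif_neg h, dif_neg h, smul_zero]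

lemma lamL_norm_le (s : S) (f : lp (fun _ : Idx => ℂ) 2) : ‖lamL I s f‖ ≤ ‖f‖ := by
  have hj : Function.Injective
      (fun a : ↥{y : Idx | D I (I.inv s) (y : S)} =>
        (⟨I.inv s * ((a.1 : Idx) : S), mul_ne I a.2 a.1.2⟩ : Idx)) := by
    intro a b h
    have hv : I.inv s * ((a.1 : Idx) : S) = I.inv s * ((b.1 : Idx) : S) :=
      congrArg Subtype.val h
    apply Subtype.ext; apply Subtype.ext
    calc ((a.1 : Idx) : S) = s * (I.inv s * ((a.1 : Idx) : S)) := (s_sinv_mul I a.2).symm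
      _ = s * (I.inv s * ((b.1 : Idx) : S)) := by rw [hv]
      _ = ((b.1 : Idx) : S) := s_sinv_mul I b.2
  have hcongr : ∀ a : ↥{y : Idx | D I (I.inv s) (y : S)},
      ‖f (⟨I.inv s * ((a.1 : Idx) : S), mul_ne I a.2 a.1.2⟩ : Idx)‖ ^ (2 : ℝ≥0∞).toReal
        = ‖preL I s (⇑f) a.1‖ ^ (2 : ℝ≥0∞).toReal := by
    intro a
    have ha : D I (I.inv s) ((a.1 : Idx) : S) := a.2
    unfold preL
    rw [dif_pos ha]
  refine lp.norm_le_of_tsum_le (by norm_num) (norm_nonneg f) ?_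
  rw [lp.norm_rpow_eq_tsum (by norm_num) f]
  have hsupp : Function.support (fun y : Idx => ‖(lamL I s f) y‖ ^ (2 : ℝ≥0∞).toReal)
      ⊆ {y : Idx | D I (I.inv s) (y : S)} := by
    intro y hy
    by_contra h
    apply hy
    show ‖preL I s (⇑f) y‖ ^ (2 : ℝ≥0∞).toReal = 0
    have hy' : ¬ D I (I.inv s) (y : S) := h
    unfold preL
    rw [dif_neg hy']
    simp
  rw [← tsum_subtype_eq_of_support_subset hsupp]
  exact Summable.tsum_le_tsum_of_inj _ hj (fun c _ => Real.rpow_nonneg (norm_nonneg _) _)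
    (fun a => le_of_eq (hcongr a).symm)
    ((Summable.comp_injective ((lp.memℓp f).summable (by norm_num)) hj).congr hcongr)
    ((lp.memℓp f).summable (by norm_num))

/-- `λ_s` as a continuous linear map. -/
noncomputable def lam (s : S) : lp (fun _ : Idx => ℂ) 2 →L[ℂ] lp (fun _ : Idx => ℂ) 2 :=
  LinearMap.mkContinuous (lamL I s) 1 fun f => by simpa using lamL_norm_le I s f

lemma lam_apply (s : S) (f : lp (fun _ : Idx => ℂ) 2) (y : Idx) :
    (lam I s f) y = if h : D I (I.inv s) (y : S)
      then f ⟨I.inv s * (y : S), mul_ne I h y.2⟩ else 0 := rfl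

lemma single_apply' (i : Idx) (a : ℂ) (j : Idx) :
    (lp.single 2 i a : lp (fun _ : Idx => ℂ) 2) j = if j = i then a else 0 := by
  rw [lp.single_apply]
  split_ifs with h
  · subst h; simp
  · simp [Pi.single_apply, h]

lemma lam_mul (s t : S) : lam I s ∘L lam I t = lam I (s * t) := by
  apply ContinuousLinearMap.ext
  intro f
  apply lp.ext
  funext y
  show preL I s (preL I t ⇑f) y = preL I (s * t) ⇑f y
  have hiff : D I (I.inv (s * t)) (y : S) ↔
      D I (I.inv s) (y : S) ∧ D I (I.inv t) (I.inv s * (y : S)) := by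
    rw [inv_mul I]
    exact D_mul_iff I (I.inv t) (I.inv s) (y : S)
  unfold preL
  by_cases h1 : D I (I.inv s) (y : S)
  · rw [dif_pos h1]
    by_cases h2 : D I (I.inv t) (I.inv s * (y : S))
    · have h2' : D I (I.inv t)
          (((⟨I.inv s * (y : S), mul_ne I h1 y.2⟩ : Idx)) : S) := h2
      rw [dif_pos h2', dif_pos (hiff.mpr ⟨h1, h2⟩)]
      apply congrArg f
      apply Subtype.ext
      show I.inv t * (I.inv s * (y : S)) = I.inv (s * t) * (y : S)
      rw [inv_mul I, mul_assoc]
    · have h2' : ¬ D I (I.inv t)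
          (((⟨I.inv s * (y : S), mul_ne I h1 y.2⟩ : Idx)) : S) := h2
      rw [dif_neg h2', dif_neg (fun hc => h2 (hiff.mp hc).2)]
  · rw [dif_neg h1, dif_neg (fun hc => h1 (hiff.mp hc).1)]

lemma lam_single_pos {s : S} {x : Idx} (h : D I s (x : S)) :
    lam I s (lp.single 2 x 1) = lp.single 2 (⟨s * (x : S), mul_ne I h x.2⟩ : Idx) 1 := by
  apply lp.ext
  funext y
  show preL I s (⇑(lp.single 2 x (1 : ℂ))) y
    = (lp.single 2 (⟨s * (x : S), mul_ne I h x.2⟩ : Idx) (1 : ℂ)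
        : lp (fun _ : Idx => ℂ) 2) y
  unfold preL
  rw [single_apply']
  by_cases hy : D I (I.inv s) (y : S)
  · rw [dif_pos hy, single_apply']
    by_cases hxy : (⟨I.inv s * (y : S), mul_ne I hy y.2⟩ : Idx) = x
    · have hval : (x : S) = I.inv s * (y : S) := (congrArg Subtype.val hxy).symm
      have hyval : y = (⟨s * (x : S), mul_ne I h x.2⟩ : Idx) := by
        apply Subtype.ext
        show (y : S) = s * (x : S)
        rw [hval, s_sinv_mul I hy]
      rw [if_pos hxy, if_pos hyval]
    · have hyval : y ≠ (⟨s * (x : S), mul_ne I h x.2⟩ : Idx) := by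
        intro hc
        apply hxy
        apply Subtype.ext
        show I.inv s * (y : S) = (x : S)
        rw [congrArg Subtype.val hc]
        exact sinv_mul I h
      rw [if_neg hxy, if_neg hyval]
  · have hyval : y ≠ (⟨s * (x : S), mul_ne I h x.2⟩ : Idx) := by
      intro hc
      apply hy
      rw [congrArg Subtype.val hc]
      exact D_inv_always I s (x : S)
    rw [dif_neg hy, if_neg hyval]

lemma lam_single_neg {s : S} {x : Idx} (h : ¬ D I s (x : S)) :
    lam I s (lp.single 2 x 1) = 0 := by
  apply lp.ext
  funext y
  show preL I s (⇑(lp.single 2 x (1 : ℂ))) y = (0 : lp (fun _ : Idx => ℂ) 2) y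
  rw [lp.coeFn_zero]
  unfold preL
  by_cases hy : D I (I.inv s) (y : S)
  · rw [dif_pos hy, single_apply', if_neg, Pi.zero_apply]
    intro hc
    apply h
    have hd := D_of_inv I s (y : S)
    have hvc : I.inv s * (y : S) = (x : S) := congrArg Subtype.val hc
    rwa [hvc] at hd
  · rw [dif_neg hy, Pi.zero_apply]

lemma lam_inv_apply (s : S) (F : lp (fun _ : Idx => ℂ) 2) (y : Idx) :
    (lam I (I.inv s) F) y = if h : D I s (y : S)
      then F ⟨s * (y : S), mul_ne I h y.2⟩ else 0 := by
  show preL I (I.inv s) (⇑F) y = _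
  unfold preL
  by_cases h : D I s (y : S)
  · have h' : D I (I.inv (I.inv s)) (y : S) := by rwa [inv_inv I]
    rw [dif_pos h', dif_pos h]
    apply congrArg F
    apply Subtype.ext
    show I.inv (I.inv s) * (y : S) = s * (y : S)
    rw [inv_inv I]
  · have h' : ¬ D I (I.inv (I.inv s)) (y : S) := by rwa [inv_inv I]
    rw [dif_neg h', dif_neg h]

lemma lam_apply' (s : S) (F : lp (fun _ : Idx => ℂ) 2) (y : Idx) :
    (lam I s F) y = if h : D I (I.inv s) (y : S)
      then F ⟨I.inv s * (y : S), mul_ne I h y.2⟩ else 0 := rfl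

/-- the bijection between the domain of `λ_{s⁻¹}` and that of `λ_s`. -/
noncomputable def eAB (s : S) :
    ↥{y : Idx | D I s (y : S)} ≃ ↥{x : Idx | D I (I.inv s) (x : S)} where
  toFun a := ⟨⟨s * ((a.1 : Idx) : S), mul_ne I a.2 a.1.2⟩, D_inv_always I s _⟩
  invFun b := ⟨⟨I.inv s * ((b.1 : Idx) : S), mul_ne I b.2 b.1.2⟩, D_of_inv I s _⟩
  left_inv a := Subtype.ext (Subtype.ext (sinv_mul I a.2))
  right_inv b := Subtype.ext (Subtype.ext (s_sinv_mul I b.2))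

lemma lam_inner (s : S) (F G : lp (fun _ : Idx => ℂ) 2) :
    (inner ℂ (lam I (I.inv s) F) G : ℂ) = inner ℂ F (lam I s G) := by
  rw [lp.inner_eq_tsum, lp.inner_eq_tsum]
  have hsuppL : Function.support
      (fun y : Idx => (inner ℂ ((lam I (I.inv s) F) y) (G y) : ℂ))
      ⊆ {y : Idx | D I s (y : S)} := by
    intro y hy
    by_contra h
    apply hy
    show (inner ℂ ((lam I (I.inv s) F) y) (G y) : ℂ) = 0
    rw [lam_inv_apply, dif_neg (show ¬ D I s (y : S) from h), inner_zero_left]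
  have hsuppR : Function.support
      (fun x : Idx => (inner ℂ (F x) ((lam I s G) x) : ℂ))
      ⊆ {x : Idx | D I (I.inv s) (x : S)} := by
    intro x hx
    by_contra h
    apply hx
    show (inner ℂ (F x) ((lam I s G) x) : ℂ) = 0
    rw [lam_apply', dif_neg (show ¬ D I (I.inv s) (x : S) from h), inner_zero_right]
  rw [← tsum_subtype_eq_of_support_subset hsuppL,
    ← tsum_subtype_eq_of_support_subset hsuppR, ← Equiv.tsum_eq (eAB I s)]
  apply tsum_congr
  intro a
  have ha : D I s ((a.1 : Idx) : S) := a.2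
  show (inner ℂ ((lam I (I.inv s) F) a.1) (G a.1) : ℂ)
    = inner ℂ (F ((eAB I s a).1)) ((lam I s G) ((eAB I s a).1))
  have heAB : ((eAB I s a).1 : Idx) = (⟨s * ((a.1 : Idx) : S), mul_ne I a.2 a.1.2⟩ : Idx) := rfl
  rw [heAB, lam_inv_apply, dif_pos ha, lam_apply',
    dif_pos (show D I (I.inv s) (((⟨s * ((a.1 : Idx) : S), mul_ne I a.2 a.1.2⟩ : Idx)) : S)
      from D_inv_always I s _)]
  congr 1
  apply congrArg G
  apply Subtype.ext
  exact (sinv_mul I ha).symm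

lemma lam_adjoint (s : S) : ContinuousLinearMap.adjoint (lam I s) = lam I (I.inv s) :=
  ((ContinuousLinearMap.eq_adjoint_iff (lam I (I.inv s)) (lam I s)).mpr
    (fun F G => lam_inner I s F G)).symm

lemma lam_partial (s : S) :
    lam I s ∘L ContinuousLinearMap.adjoint (lam I s) ∘L lam I s = lam I s := by
  rw [lam_adjoint I s, lam_mul I (I.inv s) s, lam_mul I s (I.inv s * s),
    ← mul_assoc, I.inv_spec₁]

end Analysis

end Stmt14Aux

/-- The left regular representation of an inverse semigroup with zero on
`ℓ²(S \ {0})`: there is a family `λ_s` of bounded operators with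
`λ_s δ_x = δ_{sx}` if `x x⁻¹ ≤ s⁻¹s` and `λ_s δ_x = 0` otherwise; each `λ_s` is a
partial isometry with `λ_s* = λ_{s⁻¹}`, and `λ` is multiplicative. -/
theorem stmt14 {S : Type*} [Semigroup S] [DecidableEq S] (I : InvSemigroupZero S) :
    ∃ lam : S → (lp (fun _ : {x : S // x ≠ I.zero} => ℂ) 2 →L[ℂ]
        lp (fun _ : {x : S // x ≠ I.zero} => ℂ) 2),
      (∀ (s : S) (x : {x : S // x ≠ I.zero}),
        (((x : S) * I.inv x) * (I.inv s * s) = (x : S) * I.inv x →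
          ∃ hx : s * (x : S) ≠ I.zero,
            lam s (lp.single 2 x 1) = lp.single 2 (⟨s * (x : S), hx⟩ : {x : S // x ≠ I.zero}) 1) ∧
        (¬ ((x : S) * I.inv x) * (I.inv s * s) = (x : S) * I.inv x →
          lam s (lp.single 2 x 1) = 0)) ∧
      (∀ s : S, ContinuousLinearMap.adjoint (lam s) = lam (I.inv s)) ∧
      (∀ s : S, lam s ∘L ContinuousLinearMap.adjoint (lam s) ∘L lam s = lam s) ∧
      (∀ s t : S, lam s ∘L lam t = lam (s * t)) := by
  refine ⟨Stmt14Aux.lam I, fun s x => ⟨fun h => ?_, fun h => ?_⟩,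
    fun s => Stmt14Aux.lam_adjoint I s, fun s => Stmt14Aux.lam_partial I s,
    fun s t => Stmt14Aux.lam_mul I s t⟩
  · exact ⟨Stmt14Aux.mul_ne I h x.2, Stmt14Aux.lam_single_pos I h⟩
  · exact Stmt14Aux.lam_single_neg I h
end
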